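/- arXiv:2203.10687 — 4 statements merged into one kernel-verified Lean document; each statement's English description precedes it below -/
import Mathlib

section
/- Let Z : {0,1,…,n} × Ω → ℝ be a martingale and let ε > 0. Suppose E λ̄(Z_n) − E λ̄(Z_0) < (1/6) ε³ exp(−(3/ε) · max(E|Z_0|, E|Z_n|)). Then P( max_{0 ≤ k ≤ n} |Z_k − Z_0| > ε ) < ε. -/
open MeasureTheory Filter Finset

/-- The special symmetric convex function `λ̄(v) = e^{-|v|} - 1 + |v|`. -/
noncomputable def specialLambda (v : ℝ) : ℝ := Real.exp (-|v|) - 1 + |v|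

/-- The derivative of `specialLambda`. -/
noncomputable def ell (a : ℝ) : ℝ := if 0 ≤ a then 1 - Real.exp (-a) else Real.exp a - 1


lemma measurable_ell : Measurable ell := by
  unfold ell
  exact Measurable.ite (measurableSet_le measurable_const measurable_id)
    (measurable_const.sub (measurable_id.neg.exp)) ((measurable_id.exp).sub measurable_const)

lemma abs_ell_le_one (a : ℝ) : |ell a| ≤ 1 := by
  unfold ell
  split_ifs with h
  · have h1 : Real.exp (-a) ≤ 1 := Real.exp_le_one_iff.mpr (by linarith)
    have h2 : 0 < Real.exp (-a) := Real.exp_pos _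
    rw [abs_le]; constructor <;> linarith
  · have h1 : Real.exp a ≤ 1 := Real.exp_le_one_iff.mpr (by linarith)
    have h2 : 0 < Real.exp a := Real.exp_pos _
    rw [abs_le]; constructor <;> linarith

lemma continuous_specialLambda : Continuous specialLambda := by
  unfold specialLambda; fun_prop

lemma specialLambda_nonneg (v : ℝ) : 0 ≤ specialLambda v := by
  unfold specialLambda
  have := Real.add_one_le_exp (-|v|)
  have : 1 - |v| ≤ Real.exp (-|v|) := by linarith [Real.add_one_le_exp (-|v|)]
  linarith

lemma specialLambda_le_abs (v : ℝ) : specialLambda v ≤ |v| := by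
  unfold specialLambda
  have : Real.exp (-|v|) ≤ 1 := Real.exp_le_one_iff.mpr (by simp [abs_nonneg])
  linarith



lemma F_lower_nonneg {u : ℝ} (hu : 0 ≤ u) :
    u ^ 2 / 2 * Real.exp (-u) ≤ Real.exp (-u) - 1 + u := by
  have he : Real.exp (-u) * Real.exp u = 1 := by rw [← Real.exp_add]; simp
  have hp : 0 < Real.exp u := Real.exp_pos _
  have hp' : 0 < Real.exp (-u) := Real.exp_pos _
  have key : 0 ≤ (1 - u ^ 2 / 2) + (u - 1) * Real.exp u := by
    rcases le_total u 1 with h1 | h1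
    · have hb := Real.exp_bound' hu h1 (n := 3) (by norm_num)
      have hsum : (∑ m ∈ Finset.range 3, u ^ m / m.factorial) = 1 + u + u ^ 2 / 2 := by
        simp [Finset.sum_range_succ, Nat.factorial]
      rw [hsum] at hb
      have h6 : ((Nat.factorial 3 : ℕ) : ℝ) = 6 := by norm_num [Nat.factorial]
      rw [h6] at hb
      have hb' : Real.exp u ≤ 1 + u + u ^ 2 / 2 + u ^ 3 * (2 / 9) := by nlinarith [hb]
      nlinarith [mul_nonneg (sub_nonneg.2 h1) (sub_nonneg.2 hb'),
        pow_nonneg hu 3, pow_nonneg hu 4]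
    · have hb := Real.quadratic_le_exp_of_nonneg hu
      nlinarith [mul_nonneg (sub_nonneg.2 h1) (sub_nonneg.2 hb), pow_nonneg hu 3]
  nlinarith [mul_nonneg key hp'.le, he]

lemma F_lower_nonpos {u : ℝ} (hu : u ≤ 0) :
    u ^ 2 / 2 ≤ Real.exp (-u) - 1 + u := by
  have := Real.quadratic_le_exp_of_nonneg (x := -u) (by linarith)
  nlinarith [this]

lemma specialLambda_of_nonneg {v : ℝ} (hv : 0 ≤ v) :
    specialLambda v = Real.exp (-v) - 1 + v := by
  unfold specialLambda; rw [abs_of_nonneg hv]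

lemma ell_of_nonneg {a : ℝ} (ha : 0 ≤ a) : ell a = 1 - Real.exp (-a) := if_pos ha

lemma specialLambda_neg (v : ℝ) : specialLambda (-v) = specialLambda v := by
  unfold specialLambda; rw [abs_neg]

lemma ell_neg (a : ℝ) : ell (-a) = -ell a := by
  unfold ell
  rcases lt_trichotomy a 0 with h | h | h
  · rw [if_pos (by linarith), if_neg (not_le.2 h)]; ring_nf
  · simp [h]
  · rw [if_neg (by push_neg; linarith), if_pos h.le]; ring_nf

-- main case: both nonneg
lemma key_nn {M a x : ℝ} (ha0 : 0 ≤ a) (hx0 : 0 ≤ x) (haM : a ≤ M) (hxM : x ≤ M) :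
    Real.exp (-M) / 2 * (x - a) ^ 2 ≤
      specialLambda x - specialLambda a - ell a * (x - a) := by
  rw [specialLambda_of_nonneg hx0, specialLambda_of_nonneg ha0, ell_of_nonneg ha0]
  have hsplit : Real.exp (-x) = Real.exp (-a) * Real.exp (-(x - a)) := by
    rw [← Real.exp_add]; ring_nf
  have hpa : 0 < Real.exp (-a) := Real.exp_pos _
  have hgoal : Real.exp (-M) / 2 * (x - a) ^ 2 ≤
      Real.exp (-a) * (Real.exp (-(x - a)) - 1 + (x - a)) := by
    rcases le_total 0 (x - a) with hu | hu
    · have hF := F_lower_nonneg hu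
      have hmono : Real.exp (-M) ≤ Real.exp (-x) := Real.exp_le_exp.2 (by linarith)
      calc Real.exp (-M) / 2 * (x - a) ^ 2 ≤ Real.exp (-x) / 2 * (x - a) ^ 2 := by
            nlinarith [sq_nonneg (x - a)]
        _ = Real.exp (-a) * ((x - a) ^ 2 / 2 * Real.exp (-(x - a))) := by
            rw [hsplit]; ring
        _ ≤ Real.exp (-a) * (Real.exp (-(x - a)) - 1 + (x - a)) := by
            exact mul_le_mul_of_nonneg_left hF hpa.le
    · have hF := F_lower_nonpos hu
      have hmono : Real.exp (-M) ≤ Real.exp (-a) := Real.exp_le_exp.2 (by linarith)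
      calc Real.exp (-M) / 2 * (x - a) ^ 2 ≤ Real.exp (-a) * ((x - a) ^ 2 / 2) := by
            nlinarith [sq_nonneg (x - a)]
        _ ≤ Real.exp (-a) * (Real.exp (-(x - a)) - 1 + (x - a)) :=
            mul_le_mul_of_nonneg_left hF hpa.le
  calc Real.exp (-M) / 2 * (x - a) ^ 2
      ≤ Real.exp (-a) * (Real.exp (-(x - a)) - 1 + (x - a)) := hgoal
    _ = Real.exp (-x) - 1 + x - (Real.exp (-a) - 1 + a) - (1 - Real.exp (-a)) * (x - a) := by
        rw [hsplit]; ring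

lemma ell_ge {M a : ℝ} (ha0 : 0 ≤ a) (haM : a ≤ M) : a * Real.exp (-M) ≤ ell a := by
  rw [ell_of_nonneg ha0]
  have h1 : Real.exp (-a) * Real.exp a = 1 := by rw [← Real.exp_add]; simp
  have h2 := Real.add_one_le_exp a
  have h3 : Real.exp (-a) ≤ 1 := Real.exp_le_one_iff.mpr (by linarith)
  have h4 : Real.exp (-M) ≤ Real.exp (-a) := Real.exp_le_exp.2 (by linarith)
  have h5 : 0 < Real.exp (-a) := Real.exp_pos _
  -- a * exp(-a) ≤ 1 - exp(-a)  ⟺  exp(-a) (a+1) ≤ 1 = exp(-a) exp(a)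
  nlinarith [mul_le_mul_of_nonneg_left h2 h5.le]

-- a ≥ 0 arbitrary x
lemma key_half {M a x : ℝ} (ha0 : 0 ≤ a) (haM : a ≤ M) (hxM : |x| ≤ M) :
    Real.exp (-M) / 2 * (x - a) ^ 2 ≤
      specialLambda x - specialLambda a - ell a * (x - a) := by
  rcases le_total 0 x with hx0 | hx0
  · exact key_nn ha0 hx0 haM ((le_abs_self x).trans hxM)
  · -- x ≤ 0
    have hxM' : -x ≤ M := by
      have := (abs_le.1 hxM).1; linarith
    have h1 : Real.exp (-M) / 2 * a ^ 2 ≤ specialLambda 0 - specialLambda a - ell a * (0 - a) := by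
      have := key_nn ha0 le_rfl haM (le_trans ha0 haM) (x := 0)
      simpa using this
    have h2 : Real.exp (-M) / 2 * x ^ 2 ≤ specialLambda x := by
      have := key_nn (a := 0) (x := -x) le_rfl (by linarith) (le_trans ha0 haM) hxM'
      simp [specialLambda, ell] at this ⊢
      exact this
    have h3 : a * Real.exp (-M) ≤ ell a := ell_ge ha0 haM
    have h4 : ell a * (-x) ≥ a * Real.exp (-M) * (-x) :=
      mul_le_mul_of_nonneg_right h3 (by linarith)
    have hsl0 : specialLambda 0 = 0 := by simp [specialLambda]
    rw [hsl0] at h1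
    nlinarith [h1, h2, h4]

lemma key_lemma {M a x : ℝ} (haM : |a| ≤ M) (hxM : |x| ≤ M) :
    Real.exp (-M) / 2 * (x - a) ^ 2 ≤
      specialLambda x - specialLambda a - ell a * (x - a) := by
  rcases le_total 0 a with ha0 | ha0
  · exact key_half ha0 ((le_abs_self a).trans haM) hxM
  · have := key_half (M := M) (a := -a) (x := -x) (by linarith)
      (by rw [← abs_of_nonpos ha0]; exact haM) (by rwa [abs_neg])
    rw [specialLambda_neg, specialLambda_neg, ell_neg] at this
    nlinarith [this]

lemma d_nonneg (a x : ℝ) : 0 ≤ specialLambda x - specialLambda a - ell a * (x - a) := by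
  have := key_lemma (M := max |a| |x|) (le_max_left _ _) (le_max_right _ _)
  nlinarith [this, sq_nonneg (x - a), Real.exp_pos (-max |a| |x|)]

theorem martingale_maximal_inequality
    {Ω : Type*} {m0 : MeasurableSpace Ω} {P : Measure Ω} [IsProbabilityMeasure P]
    (ℱ : Filtration ℕ m0) (Z : ℕ → Ω → ℝ) (hZ : Martingale Z ℱ P)
    (n : ℕ) (ε : ℝ) (hε : 0 < ε)
    (h : (∫ ω, specialLambda (Z n ω) ∂P) - (∫ ω, specialLambda (Z 0 ω) ∂P) <
      (1 / 6) * ε ^ 3 *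
        Real.exp (-(3 / ε) * max (∫ ω, |Z 0 ω| ∂P) (∫ ω, |Z n ω| ∂P))) :
    P {ω | ∃ k ≤ n, ε < |Z k ω - Z 0 ω|} < ENNReal.ofReal ε := by
  classical
  set Mbar : ℝ := max (∫ ω, |Z 0 ω| ∂P) (∫ ω, |Z n ω| ∂P) with hMbar_def
  have hint : ∀ k, Integrable (Z k) P := hZ.integrable
  -- trivial case : Mbar = 0
  rcases eq_or_lt_of_le (le_max_of_le_left (integral_nonneg (fun ω => abs_nonneg (Z 0 ω)))
      : (0:ℝ) ≤ Mbar) with hM0 | hMbar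
  · -- Mbar = 0 : Z 0 and Z n vanish a.e., hence all Z k, k ≤ n
    have h0 : ∫ ω, |Z 0 ω| ∂P = 0 :=
      le_antisymm ((le_max_left _ _).trans hM0.ge)
        (integral_nonneg fun ω => abs_nonneg _)
    have hn : ∫ ω, |Z n ω| ∂P = 0 :=
      le_antisymm ((le_max_right _ _).trans hM0.ge)
        (integral_nonneg fun ω => abs_nonneg _)
    have hZ0 : Z 0 =ᵐ[P] 0 := by
      have := (integral_eq_zero_iff_of_nonneg (fun ω => abs_nonneg (Z 0 ω))
        (hint 0).abs).mp h0
      filter_upwards [this] with ω hω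
      simpa [abs_eq_zero] using hω
    have hZn : Z n =ᵐ[P] 0 := by
      have := (integral_eq_zero_iff_of_nonneg (fun ω => abs_nonneg (Z n ω))
        (hint n).abs).mp hn
      filter_upwards [this] with ω hω
      simpa [abs_eq_zero] using hω
    have hZk : ∀ k ≤ n, Z k =ᵐ[P] 0 := by
      intro k hk
      have h1 : P[Z n|ℱ k] =ᵐ[P] Z k := hZ.condExp_ae_eq hk
      have h2 : P[Z n|ℱ k] =ᵐ[P] P[(0 : Ω → ℝ)|ℱ k] := condExp_congr_ae hZn
      have h3 : P[(0 : Ω → ℝ)|ℱ k] = 0 := condExp_zero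
      have h4 : P[(0 : Ω → ℝ)|ℱ k] =ᵐ[P] 0 := by rw [h3]
      exact h1.symm.trans (h2.trans h4)
    have hnull : P {ω | ∃ k ≤ n, ε < |Z k ω - Z 0 ω|} = 0 := by
      have hsub : {ω | ∃ k ≤ n, ε < |Z k ω - Z 0 ω|} ⊆
          ⋃ k ∈ Set.Iic n, {ω | ε < |Z k ω - Z 0 ω|} := by
        intro ω ⟨k, hk, hω⟩
        exact Set.mem_biUnion hk hω
      refine measure_mono_null hsub ?_
      refine (measure_biUnion_null_iff (Set.finite_Iic n).countable).mpr ?_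
      intro k hk
      have : ∀ᵐ ω ∂P, ¬ (ε < |Z k ω - Z 0 ω|) := by
        filter_upwards [hZk k hk, hZ0] with ω h1 h2
        simp only [h1, h2, Pi.zero_apply, sub_zero, abs_zero, not_lt]
        linarith
      simpa [ae_iff] using this
    rw [hnull]
    exact ENNReal.ofReal_pos.mpr hε
  -- main case
  set M : ℝ := 3 / ε * Mbar with hM_def
  have hM : 0 < M := by positivity
  set δ : ℝ := Real.exp (-M) * ε ^ 2 / 2 with hδ_def
  have hδ : 0 < δ := by positivity
  -- the process D
  set D : ℕ → Ω → ℝ := fun k ω =>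
    specialLambda (Z k ω) - specialLambda (Z 0 ω) - ell (Z 0 ω) * (Z k ω - Z 0 ω) with hD_def
  -- measurability
  have hslZ : ∀ k, StronglyMeasurable[ℱ k] (fun ω => specialLambda (Z k ω)) :=
    fun k => continuous_specialLambda.comp_stronglyMeasurable (hZ.stronglyAdapted k)
  have hellZ : ∀ k, StronglyMeasurable[ℱ k] (fun ω => ell (Z k ω)) :=
    fun k => (measurable_ell.comp (hZ.stronglyAdapted k).measurable).stronglyMeasurable
  have hDadp : StronglyAdapted ℱ D := by
    intro k
    exact ((hslZ k).sub ((hslZ 0).mono (ℱ.mono (Nat.zero_le k)))).sub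
      (((hellZ 0).mono (ℱ.mono (Nat.zero_le k))).mul
        ((hZ.stronglyAdapted k).sub ((hZ.stronglyAdapted 0).mono (ℱ.mono (Nat.zero_le k)))))
  -- integrability
  have hslint : ∀ k, Integrable (fun ω => specialLambda (Z k ω)) P := by
    intro k
    refine (hint k).mono (((hslZ k).mono (ℱ.le k)).aestronglyMeasurable) ?_
    refine ae_of_all _ fun ω => ?_
    rw [Real.norm_eq_abs, Real.norm_eq_abs, abs_of_nonneg (specialLambda_nonneg _)]
    exact specialLambda_le_abs _
  have hmulint : ∀ j k l : ℕ, Integrable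
      (fun ω => (ell (Z j ω) - ell (Z l ω)) * (Z k ω - Z l ω)) P := by
    intro j k l
    refine Integrable.bdd_mul ((hint k).sub (hint l))
      ((((hellZ j).mono (ℱ.le j)).sub ((hellZ l).mono (ℱ.le l))).aestronglyMeasurable) (c := 2) (ae_of_all _ ?_)
    intro ω
    have h1 := abs_ell_le_one (Z j ω)
    have h2 := abs_ell_le_one (Z l ω)
    rw [Real.norm_eq_abs]
    calc |ell (Z j ω) - ell (Z l ω)| ≤ |ell (Z j ω)| + |ell (Z l ω)| := abs_sub _ _
      _ ≤ 2 := by linarith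
  have hLint : ∀ k : ℕ, Integrable (fun ω => ell (Z 0 ω) * (Z k ω - Z 0 ω)) P := by
    intro k
    refine Integrable.bdd_mul ((hint k).sub (hint 0))
      (((hellZ 0).mono (ℱ.le 0)).aestronglyMeasurable) (c := 1) (ae_of_all _ fun ω => ?_)
    rw [Real.norm_eq_abs]; exact abs_ell_le_one _
  have hDint : ∀ k, Integrable (D k) P := by
    intro k
    exact ((hslint k).sub (hslint 0)).sub (hLint k)
  -- conditional expectation of increments vanishes
  have hcondZ : ∀ i k : ℕ, i ≤ k → P[fun ω => Z k ω - Z i ω|ℱ i] =ᵐ[P] 0 := by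
    intro i k hik
    have h1 : P[fun ω => Z k ω - Z i ω|ℱ i] =ᵐ[P] P[Z k|ℱ i] - P[Z i|ℱ i] :=
      condExp_sub (hint k) (hint i) _
    have h2 : P[Z k|ℱ i] =ᵐ[P] Z i := hZ.condExp_ae_eq hik
    have h3 : P[Z i|ℱ i] = Z i :=
      condExp_of_stronglyMeasurable (ℱ.le i) (hZ.stronglyAdapted i) (hint i)
    filter_upwards [h1, h2] with ω hω1 hω2
    rw [hω1, Pi.sub_apply, hω2, h3, Pi.zero_apply, sub_self]
  -- D is a submartingale
  have hDsub : Submartingale D ℱ P := by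
    refine submartingale_nat hDadp hDint fun i => ?_
    set g : Ω → ℝ := fun ω => ell (Z i ω) - ell (Z 0 ω) with hg_def
    set q : Ω → ℝ := fun ω => Z (i+1) ω - Z i ω with hq_def
    have hgq_int : Integrable (fun ω => g ω * q ω) P := by
      refine Integrable.bdd_mul ((hint (i+1)).sub (hint i))
        ((((hellZ i).mono (ℱ.le i)).sub ((hellZ 0).mono (ℱ.le 0))).aestronglyMeasurable)
        (c := 2) (ae_of_all _ fun ω => ?_)
      rw [Real.norm_eq_abs]
      calc |ell (Z i ω) - ell (Z 0 ω)| ≤ |ell (Z i ω)| + |ell (Z 0 ω)| := abs_sub _ _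
        _ ≤ 2 := by linarith [abs_ell_le_one (Z i ω), abs_ell_le_one (Z 0 ω)]
    have hpt : ∀ ω, D i ω + g ω * q ω ≤ D (i+1) ω := by
      intro ω
      have := d_nonneg (Z i ω) (Z (i+1) ω)
      simp only [hD_def, hg_def, hq_def]
      nlinarith [this]
    have e1 : P[fun ω => D i ω + g ω * q ω|ℱ i] ≤ᵐ[P] P[D (i+1)|ℱ i] :=
      condExp_mono ((hDint i).add hgq_int) (hDint (i+1)) (ae_of_all _ hpt)
    have e2 : P[fun ω => D i ω + g ω * q ω|ℱ i] =ᵐ[P] P[D i|ℱ i] + P[fun ω => g ω * q ω|ℱ i] :=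
      condExp_add (hDint i) hgq_int _
    have e3 : P[D i|ℱ i] = D i :=
      condExp_of_stronglyMeasurable (ℱ.le i) (hDadp i) (hDint i)
    have hgmeas : StronglyMeasurable[ℱ i] g :=
      (hellZ i).sub ((hellZ 0).mono (ℱ.mono (Nat.zero_le i)))
    have e4 : P[fun ω => g ω * q ω|ℱ i] =ᵐ[P] g * P[q|ℱ i] :=
      condExp_mul_of_stronglyMeasurable_left hgmeas hgq_int ((hint (i+1)).sub (hint i))
    have e5 : P[q|ℱ i] =ᵐ[P] 0 := hcondZ i (i+1) (Nat.le_succ i)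
    filter_upwards [e1, e2, e4, e5] with ω h1 h2 h4 h5
    rw [h2, Pi.add_apply, e3, h4, Pi.mul_apply, h5, Pi.zero_apply, mul_zero,
      add_zero] at h1
    exact h1
  -- ∫ D n < (1/6) ε³ exp(-M)
  have hDn_nonneg : ∀ ω, 0 ≤ D n ω := fun ω => d_nonneg _ _
  have hzero : ∫ ω, ell (Z 0 ω) * (Z n ω - Z 0 ω) ∂P = 0 := by
    have c1 : P[fun ω => ell (Z 0 ω) * (Z n ω - Z 0 ω)|ℱ 0] =ᵐ[P]
        (fun ω => ell (Z 0 ω)) * P[fun ω => Z n ω - Z 0 ω|ℱ 0] :=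
      condExp_mul_of_stronglyMeasurable_left (hellZ 0) (hLint n) ((hint n).sub (hint 0))
    have c2 : P[fun ω => Z n ω - Z 0 ω|ℱ 0] =ᵐ[P] 0 := hcondZ 0 n (Nat.zero_le n)
    have c3 : P[fun ω => ell (Z 0 ω) * (Z n ω - Z 0 ω)|ℱ 0] =ᵐ[P] 0 := by
      filter_upwards [c1, c2] with ω h1 h2
      rw [h1, Pi.mul_apply, h2, Pi.zero_apply, mul_zero]
    calc ∫ ω, ell (Z 0 ω) * (Z n ω - Z 0 ω) ∂P
        = ∫ ω, (P[fun ω => ell (Z 0 ω) * (Z n ω - Z 0 ω)|ℱ 0]) ω ∂P :=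
          (integral_condExp (ℱ.le 0)).symm
      _ = ∫ _ω, (0:ℝ) ∂P := integral_congr_ae c3
      _ = 0 := by simp
  have hDn_lt : ∫ ω, D n ω ∂P < 1 / 6 * ε ^ 3 * Real.exp (-M) := by
    have : ∫ ω, D n ω ∂P = (∫ ω, specialLambda (Z n ω) ∂P) -
        (∫ ω, specialLambda (Z 0 ω) ∂P) - ∫ ω, ell (Z 0 ω) * (Z n ω - Z 0 ω) ∂P := by
      simp only [hD_def]
      rw [integral_sub (f := fun ω => specialLambda (Z n ω) - specialLambda (Z 0 ω))
        (g := fun ω => ell (Z 0 ω) * (Z n ω - Z 0 ω)) ((hslint n).sub (hslint 0)) (hLint n),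
        integral_sub (f := fun ω => specialLambda (Z n ω))
        (g := fun ω => specialLambda (Z 0 ω)) (hslint n) (hslint 0)]
    rw [this, hzero, sub_zero]
    have hexp : -(3 / ε) * Mbar = -M := by rw [hM_def]; ring
    rw [← hexp]
    exact h
  -- |Z| is a submartingale
  have habs : Submartingale (fun k ω => |Z k ω|) ℱ P := by
    have heq : (fun (k : ℕ) (ω : Ω) => |Z k ω|) = Z ⊔ (-Z) := by
      funext k ω
      simp only [Pi.sup_apply, Pi.neg_apply]
      exact abs_eq_max_neg
    rw [heq]
    exact hZ.submartingale.sup hZ.neg.submartingale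
  -- the two bad sets
  set S1 : Set Ω :=
    {ω | M ≤ (range (n+1)).sup' (Finset.nonempty_range_iff.2 (Nat.succ_ne_zero n)) fun k => |Z k ω|} with hS1_def
  set S2 : Set Ω :=
    {ω | δ ≤ (range (n+1)).sup' (Finset.nonempty_range_iff.2 (Nat.succ_ne_zero n)) fun k => D k ω} with hS2_def
  -- Doob for |Z|
  have doob1 : ENNReal.ofReal M * P S1 ≤ ENNReal.ofReal Mbar := by
    have habs_nonneg : (0 : ℕ → Ω → ℝ) ≤ fun k ω => |Z k ω| :=
      fun k ω => abs_nonneg _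
    have hd := maximal_ineq habs habs_nonneg (ε := M.toNNReal) n
    rw [Real.coe_toNNReal M hM.le] at hd
    have hsmul : ((M.toNNReal : ENNReal) * P S1) = ENNReal.ofReal M * P S1 := rfl
    rw [hsmul] at hd
    refine hd.trans (ENNReal.ofReal_le_ofReal ?_)
    calc ∫ ω in S1, |Z n ω| ∂P ≤ ∫ ω, |Z n ω| ∂P :=
          setIntegral_le_integral (hint n).abs (ae_of_all _ fun ω => abs_nonneg _)
      _ ≤ Mbar := le_max_right _ _
  have hS1 : P S1 ≤ ENNReal.ofReal (ε / 3) := by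
    have hM_ne : ENNReal.ofReal M ≠ 0 := by
      simp [ENNReal.ofReal_eq_zero, not_le, hM]
    have hM_ne' : ENNReal.ofReal M ≠ ⊤ := ENNReal.ofReal_ne_top
    have doob1' : P S1 * ENNReal.ofReal M ≤ ENNReal.ofReal Mbar := by
      rwa [mul_comm] at doob1
    have := (ENNReal.le_div_iff_mul_le (Or.inl hM_ne) (Or.inl hM_ne')).mpr doob1'
    refine this.trans ?_
    rw [← ENNReal.ofReal_div_of_pos hM]
    refine ENNReal.ofReal_le_ofReal (le_of_eq ?_)
    have hMbar' : Mbar ≠ 0 := ne_of_gt hMbar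
    have hε' : ε ≠ 0 := ne_of_gt hε
    rw [hM_def]
    field_simp
  -- inclusion
  have hsub : {ω | ∃ k ≤ n, ε < |Z k ω - Z 0 ω|} ⊆ S1 ∪ S2 := by
    intro ω hω
    obtain ⟨k, hk, hεk⟩ := hω
    by_cases hin : ω ∈ S1
    · exact Or.inl hin
    · refine Or.inr ?_
      have hlt : ((range (n+1)).sup' (Finset.nonempty_range_iff.2 (Nat.succ_ne_zero n)) fun j => |Z j ω|) < M := by
        simpa [hS1_def, not_le] using hin
      have hbd : ∀ j, j ≤ n → |Z j ω| ≤ M := by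
        intro j hj
        refine le_trans (Finset.le_sup' (f := fun j => |Z j ω|)
          (Finset.mem_range.2 (Nat.lt_succ_of_le hj))) hlt.le
      have hDk : δ ≤ D k ω := by
        have hkey := key_lemma (M := M) (hbd 0 (Nat.zero_le n)) (hbd k hk)
        have hsq : ε ^ 2 ≤ (Z k ω - Z 0 ω) ^ 2 := by
          have h1 : ε ≤ |Z k ω - Z 0 ω| := hεk.le
          nlinarith [abs_nonneg (Z k ω - Z 0 ω), sq_abs (Z k ω - Z 0 ω)]
        have : δ ≤ Real.exp (-M) / 2 * (Z k ω - Z 0 ω) ^ 2 := by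
          rw [hδ_def]
          nlinarith [Real.exp_pos (-M)]
        exact this.trans hkey
      exact le_trans hDk (Finset.le_sup' (f := fun j => D j ω)
        (Finset.mem_range.2 (Nat.lt_succ_of_le hk)))
  -- by contradiction
  by_contra hcon
  push_neg at hcon
  have hPA : ENNReal.ofReal ε ≤ P S1 + P S2 :=
    hcon.trans ((measure_mono hsub).trans (measure_union_le _ _))
  have hS2 : ENNReal.ofReal (2 * ε / 3) ≤ P S2 := by
    have h1 : ENNReal.ofReal ε - ENNReal.ofReal (ε / 3) ≤ P S2 := by
      rw [tsub_le_iff_right]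
      exact hPA.trans (by rw [add_comm]; exact add_le_add_right hS1 _)
    rw [← ENNReal.ofReal_sub _ (by positivity)] at h1
    convert h1 using 2
    ring
  -- Doob for D
  have doob2 : ENNReal.ofReal δ * P S2 ≤ ENNReal.ofReal (∫ ω, D n ω ∂P) := by
    have hD_nonneg : (0 : ℕ → Ω → ℝ) ≤ D := fun k ω => d_nonneg _ _
    have hd := maximal_ineq hDsub hD_nonneg (ε := δ.toNNReal) n
    rw [Real.coe_toNNReal δ hδ.le] at hd
    have hsmul : ((δ.toNNReal : ENNReal) * P S2) = ENNReal.ofReal δ * P S2 := rfl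
    rw [hsmul] at hd
    refine hd.trans (ENNReal.ofReal_le_ofReal ?_)
    exact setIntegral_le_integral (hDint n) (ae_of_all _ hDn_nonneg)
  have hfinal : δ * (2 * ε / 3) ≤ ∫ ω, D n ω ∂P := by
    have h1 : ENNReal.ofReal (δ * (2 * ε / 3)) ≤ ENNReal.ofReal (∫ ω, D n ω ∂P) := by
      rw [ENNReal.ofReal_mul hδ.le]
      exact (mul_le_mul_right hS2 _).trans doob2
    exact (ENNReal.ofReal_le_ofReal_iff (integral_nonneg hDn_nonneg)).mp h1
  have : δ * (2 * ε / 3) = Real.exp (-M) * ε ^ 3 / 3 := by rw [hδ_def]; ring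
  rw [this] at hfinal
  nlinarith [Real.exp_pos (-M), hDn_lt, hfinal]
end

section
/- (Reflection principle) Let B be a standard one-dimensional Brownian motion started at 0, and let t > 0 and λ > 0. Then P( sup_{s ∈ [0,t]} B_s ≥ λ ) = 2(1 − Φ(λ/√t)), where Φ is the standard normal cumulative distribution function. -/
set_option maxHeartbeats 1000000


open MeasureTheory Filter ProbabilityTheory

/-- A standard one-dimensional Brownian motion started at `0`. -/
structure IsBrownianMotion1 {Ω : Type*} [MeasurableSpace Ω] (P : Measure Ω)
    (B : ℝ → Ω → ℝ) : Prop where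
  stronglyMeasurable : ∀ t, StronglyMeasurable (B t)
  init : ∀ ω, B 0 ω = 0
  cont : ∀ ω, Continuous fun t => B t ω
  gauss : ∀ s t : ℝ, 0 ≤ s → s ≤ t →
    P.map (fun ω => B t ω - B s ω) = gaussianReal 0 ((t - s).toNNReal)
  indepIncr : ∀ (n : ℕ) (t : Fin (n + 1) → ℝ), Monotone t → 0 ≤ t 0 →
    iIndepFun
      (fun (k : Fin n) ω => B (t k.succ) ω - B (t k.castSucc) ω) P

/-- The standard normal cumulative distribution function. -/
noncomputable def stdNormalCDF (x : ℝ) : ℝ := (gaussianReal 0 1 (Set.Iic x)).toReal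


namespace RPaux
open Finset Real
open scoped NNReal ENNReal Topology
set_option linter.unusedSectionVars false
set_option linter.unusedVariables false



noncomputable def psum (n j : ℕ) (x : Fin n → ℝ) : ℝ :=
  ∑ i : Fin n, if (i : ℕ) < j then x i else 0

def refl (n k : ℕ) (x : Fin n → ℝ) : Fin n → ℝ :=
  fun i => if (i : ℕ) < k then x i else -x i

lemma measurable_psum (n j : ℕ) : Measurable (psum n j) := by
  apply Finset.measurable_sum
  intro i _
  by_cases h : (i : ℕ) < j <;> simp [h, measurable_pi_apply]

lemma measurable_refl (n k : ℕ) : Measurable (refl n k) := by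
  apply measurable_pi_lambda
  intro i
  by_cases h : (i : ℕ) < k <;> simp [refl, h, measurable_pi_apply, Measurable.neg]

@[simp] lemma psum_zero (n : ℕ) (x : Fin n → ℝ) : psum n 0 x = 0 := by simp [psum]

lemma psum_refl_of_le (n j k : ℕ) (hjk : j ≤ k) (x : Fin n → ℝ) :
    psum n j (refl n k x) = psum n j x := by
  unfold psum refl
  refine Finset.sum_congr rfl fun i _ => ?_
  by_cases h : (i : ℕ) < j
  · simp [h, lt_of_lt_of_le h hjk]
  · simp [h]

lemma psum_refl_of_ge (n j k : ℕ) (hkj : k ≤ j) (x : Fin n → ℝ) :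
    psum n j (refl n k x) = 2 * psum n k x - psum n j x := by
  have key : psum n j (refl n k x) + psum n j x = 2 * psum n k x := by
    unfold psum refl
    rw [← Finset.sum_add_distrib, Finset.mul_sum]
    refine Finset.sum_congr rfl fun i _ => ?_
    by_cases hik : (i : ℕ) < k
    · simp [hik, lt_of_lt_of_le hik hkj]; ring
    · by_cases hij : (i : ℕ) < j <;> simp [hik, hij]
  linarith

lemma psum_succ (n k : ℕ) (x : Fin n → ℝ) :
    psum n (k + 1) x = psum n k x + (if hk : k < n then x ⟨k, hk⟩ else 0) := by
  unfold psum
  have : ∀ i : Fin n, (if (i : ℕ) < k + 1 then x i else 0)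
      = (if (i : ℕ) < k then x i else 0) + (if (i : ℕ) = k then x i else 0) := by
    intro i
    rcases Nat.lt_trichotomy (i : ℕ) k with h | h | h
    · simp [h, Nat.lt_succ_of_lt h, h.ne]
    · simp [h]
    · simp [not_lt.2 h.le, not_lt.2 (Nat.succ_le_of_lt h), h.ne']
  rw [Finset.sum_congr rfl (fun i _ => this i), Finset.sum_add_distrib]
  congr 1
  by_cases hk : k < n
  · rw [dif_pos hk]
    have : ∀ i : Fin n, ((i : ℕ) = k) ↔ i = ⟨k, hk⟩ := by
      intro i; constructor <;> intro h <;> simp_all [Fin.ext_iff]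
    simp_rw [this]
    simp
  · rw [dif_neg hk]
    refine Finset.sum_eq_zero fun i _ => ?_
    have : (i : ℕ) ≠ k := fun h => hk (h ▸ i.isLt)
    simp [this]

/-- first-crossing-at-`k` set -/
def fcs (n : ℕ) (lev : ℝ) (k : ℕ) : Set (Fin n → ℝ) :=
  {x | (∀ j < k, psum n j x < lev) ∧ lev ≤ psum n k x}

def cross (n : ℕ) (lev : ℝ) : Set (Fin n → ℝ) := {x | ∃ j ≤ n, lev ≤ psum n j x}

lemma measurableSet_fcs (n : ℕ) (lev : ℝ) (k : ℕ) : MeasurableSet (fcs n lev k) := by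
  have : fcs n lev k
      = (⋂ j ∈ Finset.range k, {x | psum n j x < lev}) ∩ {x | lev ≤ psum n k x} := by
    ext x; simp [fcs]
  rw [this]
  exact (MeasurableSet.biInter (Finset.range k).countable_toSet
    (fun j _ => measurableSet_lt (measurable_psum n j) measurable_const)).inter
    (measurableSet_le measurable_const (measurable_psum n k))

lemma measurableSet_cross (n : ℕ) (lev : ℝ) : MeasurableSet (cross n lev) := by
  have : cross n lev = ⋃ j ∈ Finset.range (n+1), {x | lev ≤ psum n j x} := by
    ext x; simp [cross, Nat.lt_succ_iff]
  rw [this]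
  exact MeasurableSet.biUnion (Finset.range (n+1)).countable_toSet
    (fun j _ => measurableSet_le measurable_const (measurable_psum n j))

lemma cross_eq_biUnion (n : ℕ) (lev : ℝ) :
    cross n lev = ⋃ k ∈ Finset.range (n+1), fcs n lev k := by
  ext x
  simp only [cross, Set.mem_setOf_eq, Set.mem_iUnion, Finset.mem_range, Nat.lt_succ_iff,
    exists_prop]
  constructor
  · rintro ⟨j, hj, hx⟩
    have hex : ∃ m, lev ≤ psum n m x := ⟨j, hx⟩
    refine ⟨Nat.find hex, le_trans (Nat.find_min' hex hx) hj, fun j' hj' => ?_, Nat.find_spec hex⟩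
    exact lt_of_not_ge (Nat.find_min hex hj')
  · rintro ⟨k, hk, _, hx⟩
    exact ⟨k, hk, hx⟩

lemma fcs_disjoint (n : ℕ) (lev : ℝ) {k k' : ℕ} (h : k ≠ k') :
    Disjoint (fcs n lev k) (fcs n lev k') := by
  wlog hlt : k < k' generalizing k k'
  · exact (this h.symm (h.lt_or_gt.resolve_left hlt)).symm
  rw [Set.disjoint_left]
  rintro x ⟨_, h2⟩ ⟨h3, _⟩
  exact absurd h2 (not_le.2 (h3 k hlt))

lemma fcs_zero_empty (n : ℕ) {lev : ℝ} (hlev : 0 < lev) : fcs n lev 0 = ∅ := by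
  ext x; simp [fcs, hlev.not_ge]

variable {κ : Measure ℝ} [IsProbabilityMeasure κ]

lemma map_refl (hκ : κ.map Neg.neg = κ) (n k : ℕ) :
    (Measure.pi (fun _ : Fin n => κ)).map (refl n k) = Measure.pi (fun _ : Fin n => κ) := by
  refine (Measure.pi_eq (fun s hs => ?_)).symm
  rw [Measure.map_apply (measurable_refl n k) (MeasurableSet.univ_pi hs)]
  have hpre : refl n k ⁻¹' Set.pi Set.univ s
      = Set.pi Set.univ (fun i : Fin n => if (i : ℕ) < k then s i else Neg.neg ⁻¹' s i) := by
    ext x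
    simp only [Set.mem_preimage, Set.mem_pi, Set.mem_univ, forall_true_left, refl]
    refine forall_congr' fun i => ?_
    by_cases h : (i : ℕ) < k <;> simp [h]
  rw [hpre, Measure.pi_pi]
  refine Finset.prod_congr rfl fun i _ => ?_
  by_cases h : (i : ℕ) < k
  · simp [h]
  · simp only [h, if_false]
    conv_rhs => rw [← hκ]
    rw [Measure.map_apply measurable_neg (hs i)]

lemma measure_preimage_refl (hκ : κ.map Neg.neg = κ) (n k : ℕ) {T : Set (Fin n → ℝ)}
    (hT : MeasurableSet T) :
    Measure.pi (fun _ : Fin n => κ) (refl n k ⁻¹' T) = Measure.pi (fun _ : Fin n => κ) T := by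
  conv_rhs => rw [← map_refl hκ n k]
  rw [Measure.map_apply (measurable_refl n k) hT]

lemma measure_eval_Ioi (n : ℕ) (i : Fin n) (δ : ℝ) :
    Measure.pi (fun _ : Fin n => κ) {x | δ < x i} = κ (Set.Ioi δ) := by
  have : {x : Fin n → ℝ | δ < x i}
      = Set.pi Set.univ (fun j => if j = i then Set.Ioi δ else Set.univ) := by
    ext x
    simp only [Set.mem_setOf_eq, Set.mem_pi, Set.mem_univ, forall_true_left]
    constructor
    · intro h j
      by_cases hj : j = i <;> simp [hj, h]
    · intro h
      have := h i
      simpa using this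
  rw [this, Measure.pi_pi]
  rw [Finset.prod_eq_single i (fun j _ hj => by simp [hj]) (by simp)]
  simp

/-- the reflection identity -/
lemma fcs_reflect (hκ : κ.map Neg.neg = κ) (n : ℕ) (lev c : ℝ) {k : ℕ} (hk : k ≤ n) :
    Measure.pi (fun _ : Fin n => κ) (fcs n lev k ∩ {x | psum n n x < c})
      = Measure.pi (fun _ : Fin n => κ)
        (fcs n lev k ∩ {x | 2 * psum n k x - psum n n x < c}) := by
  have hset : refl n k ⁻¹' (fcs n lev k ∩ {x | psum n n x < c})
      = fcs n lev k ∩ {x | 2 * psum n k x - psum n n x < c} := by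
    ext x
    simp only [Set.mem_preimage, Set.mem_inter_iff, Set.mem_setOf_eq, fcs]
    rw [psum_refl_of_ge n n k hk, psum_refl_of_le n k k le_rfl]
    constructor
    · rintro ⟨⟨h1, h2⟩, h3⟩
      exact ⟨⟨fun j hj => by rw [← psum_refl_of_le n j k hj.le x]; exact h1 j hj, h2⟩, h3⟩
    · rintro ⟨⟨h1, h2⟩, h3⟩
      exact ⟨⟨fun j hj => by rw [psum_refl_of_le n j k hj.le x]; exact h1 j hj, h2⟩, h3⟩
  rw [← hset, measure_preimage_refl hκ n k]
  exact (measurableSet_fcs n lev k).inter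
    (measurableSet_lt (measurable_psum n n) measurable_const)

lemma sum_fcs_inter (n : ℕ) (lev : ℝ) {T : Set (Fin n → ℝ)} (hT : MeasurableSet T) :
    ∑ k ∈ Finset.range (n+1), Measure.pi (fun _ : Fin n => κ) (fcs n lev k ∩ T)
      = Measure.pi (fun _ : Fin n => κ) (cross n lev ∩ T) := by
  rw [cross_eq_biUnion, Set.iUnion₂_inter]
  rw [measure_biUnion_finset]
  · exact fun k _ k' _ hkk' =>
      Disjoint.mono Set.inter_subset_left Set.inter_subset_left (fcs_disjoint n lev hkk')
  · exact fun k _ => (measurableSet_fcs n lev k).inter hT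

/-- Discrete reflection: upper bound -/
lemma cross_upper (hκ : κ.map Neg.neg = κ) (n : ℕ) {lev : ℝ} (hlev : 0 < lev) :
    Measure.pi (fun _ : Fin n => κ) (cross n lev)
      ≤ 2 * Measure.pi (fun _ : Fin n => κ) {x | lev ≤ psum n n x} := by
  set ν := Measure.pi (fun _ : Fin n => κ) with hν
  have hTm : MeasurableSet {x : Fin n → ℝ | lev ≤ psum n n x} :=
    measurableSet_le measurable_const (measurable_psum n n)
  have hTm' : MeasurableSet {x : Fin n → ℝ | psum n n x < lev} :=
    measurableSet_lt (measurable_psum n n) measurable_const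
  have hsplit : ν (cross n lev) = ∑ k ∈ Finset.range (n+1), ν (fcs n lev k) := by
    have := sum_fcs_inter (κ := κ) n lev MeasurableSet.univ
    simpa using this.symm
  have hkey : ∀ k ∈ Finset.range (n+1), ν (fcs n lev k)
      ≤ 2 * ν (fcs n lev k ∩ {x | lev ≤ psum n n x}) := by
    intro k hk
    rw [Finset.mem_range, Nat.lt_succ_iff] at hk
    have hdiff : fcs n lev k \ {x | psum n n x < lev}
        = fcs n lev k ∩ {x | lev ≤ psum n n x} := by
      ext x
      simp only [Set.mem_diff, Set.mem_inter_iff, Set.mem_setOf_eq, not_lt]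
    have hdecomp : ν (fcs n lev k) = ν (fcs n lev k ∩ {x | psum n n x < lev})
        + ν (fcs n lev k ∩ {x | lev ≤ psum n n x}) := by
      rw [← measure_inter_add_diff (fcs n lev k) hTm', hdiff]
    rw [hdecomp, fcs_reflect hκ n lev lev hk, two_mul]
    refine add_le_add (measure_mono ?_) le_rfl
    rintro x ⟨hx1, hx2⟩
    refine ⟨hx1, ?_⟩
    have h2' := hx1.2
    simp only [Set.mem_setOf_eq] at hx2 ⊢
    linarith
  calc ν (cross n lev) = ∑ k ∈ Finset.range (n+1), ν (fcs n lev k) := hsplit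
    _ ≤ ∑ k ∈ Finset.range (n+1), 2 * ν (fcs n lev k ∩ {x | lev ≤ psum n n x}) :=
        Finset.sum_le_sum hkey
    _ = 2 * ∑ k ∈ Finset.range (n+1), ν (fcs n lev k ∩ {x | lev ≤ psum n n x}) := by
        rw [Finset.mul_sum]
    _ = 2 * ν (cross n lev ∩ {x | lev ≤ psum n n x}) := by rw [sum_fcs_inter n lev hTm]
    _ ≤ 2 * ν {x | lev ≤ psum n n x} := by gcongr; exact Set.inter_subset_right

/-- Discrete reflection: lower bound -/
lemma cross_lower (hκ : κ.map Neg.neg = κ) (n : ℕ) {lev δ : ℝ} (hlev : 0 < lev) (hδ : 0 < δ) :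
    2 * Measure.pi (fun _ : Fin n => κ) {x | lev + 2*δ < psum n n x}
      ≤ Measure.pi (fun _ : Fin n => κ) (cross n lev) + n * κ (Set.Ioi δ) := by
  set ν := Measure.pi (fun _ : Fin n => κ) with hν
  have hT2m : MeasurableSet {x : Fin n → ℝ | lev + 2*δ < psum n n x} :=
    measurableSet_lt measurable_const (measurable_psum n n)
  have hTm : MeasurableSet {x : Fin n → ℝ | lev ≤ psum n n x} :=
    measurableSet_le measurable_const (measurable_psum n n)
  have hT2T : {x : Fin n → ℝ | lev + 2*δ < psum n n x} ⊆ {x | lev ≤ psum n n x} := by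
    intro x hx; simp only [Set.mem_setOf_eq] at hx ⊢; linarith
  have hTcross : {x : Fin n → ℝ | lev ≤ psum n n x} ⊆ cross n lev := fun x hx => ⟨n, le_rfl, hx⟩
  -- step 3 : overshoot bound
  have hovershoot : ∑ k ∈ Finset.range (n+1), ν (fcs n lev k ∩ {x | lev + δ < psum n k x})
      ≤ n * κ (Set.Ioi δ) := by
    rw [Finset.sum_range_succ']
    have h0 : ν (fcs n lev 0 ∩ {x | lev + δ < psum n 0 x}) = 0 := by
      rw [fcs_zero_empty n hlev]; simp
    rw [h0, add_zero]
    have hterm : ∀ j ∈ Finset.range n,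
        ν (fcs n lev (j+1) ∩ {x | lev + δ < psum n (j+1) x}) ≤ κ (Set.Ioi δ) := by
      intro j hj
      rw [Finset.mem_range] at hj
      have hsub : fcs n lev (j+1) ∩ {x | lev + δ < psum n (j+1) x} ⊆ {x | δ < x ⟨j, hj⟩} := by
        rintro x ⟨⟨h1, _⟩, h2⟩
        have hprev : psum n j x < lev := h1 j (Nat.lt_succ_self j)
        have hstep : psum n (j+1) x = psum n j x + x ⟨j, hj⟩ := by
          rw [psum_succ n j x, dif_pos hj]
        simp only [Set.mem_setOf_eq] at h2 ⊢
        linarith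
      calc ν _ ≤ ν {x | δ < x ⟨j, hj⟩} := measure_mono hsub
        _ = κ (Set.Ioi δ) := measure_eval_Ioi n _ δ
    calc ∑ j ∈ Finset.range n, ν (fcs n lev (j+1) ∩ {x | lev + δ < psum n (j+1) x})
        ≤ ∑ _j ∈ Finset.range n, κ (Set.Ioi δ) := Finset.sum_le_sum hterm
      _ = n * κ (Set.Ioi δ) := by simp [Finset.sum_const, nsmul_eq_mul]
  -- step 2 : main comparison
  have hmain : ν {x | lev ≤ psum n n x} + ν {x | lev + 2*δ < psum n n x}
      ≤ ν (cross n lev)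
        + ∑ k ∈ Finset.range (n+1), ν (fcs n lev k ∩ {x | lev + δ < psum n k x}) := by
    have hdiff : cross n lev \ {x | lev ≤ psum n n x}
        = cross n lev ∩ {x | psum n n x < lev} := by
      ext x
      simp only [Set.mem_diff, Set.mem_inter_iff, Set.mem_setOf_eq, not_le]
    have hcross_split : ν (cross n lev)
        = ν {x | lev ≤ psum n n x}
          + ∑ k ∈ Finset.range (n+1), ν (fcs n lev k ∩ {x | psum n n x < lev}) := by
      rw [sum_fcs_inter n lev (measurableSet_lt (measurable_psum n n) measurable_const)]
      rw [← measure_inter_add_diff (cross n lev) hTm, hdiff,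
        Set.inter_eq_right.2 hTcross]
    have hperk : ∀ k ∈ Finset.range (n+1),
        ν (fcs n lev k ∩ {x | lev + 2*δ < psum n n x})
          ≤ ν (fcs n lev k ∩ {x | psum n n x < lev})
            + ν (fcs n lev k ∩ {x | lev + δ < psum n k x}) := by
      intro k hk
      rw [Finset.mem_range, Nat.lt_succ_iff] at hk
      rw [fcs_reflect hκ n lev lev hk]
      have hsub : fcs n lev k ∩ {x | lev + 2*δ < psum n n x}
          ⊆ (fcs n lev k ∩ {x | 2 * psum n k x - psum n n x < lev})
            ∪ (fcs n lev k ∩ {x | lev + δ < psum n k x}) := by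
        rintro x ⟨hx1, hx2⟩
        simp only [Set.mem_setOf_eq] at hx2
        by_cases hc : lev + δ < psum n k x
        · exact Or.inr ⟨hx1, hc⟩
        · push_neg at hc
          refine Or.inl ⟨hx1, ?_⟩
          simp only [Set.mem_setOf_eq]
          linarith
      exact le_trans (measure_mono hsub) (measure_union_le _ _)
    calc ν {x | lev ≤ psum n n x} + ν {x | lev + 2*δ < psum n n x}
        = ν {x | lev ≤ psum n n x}
          + ∑ k ∈ Finset.range (n+1), ν (fcs n lev k ∩ {x | lev + 2*δ < psum n n x}) := by
          rw [sum_fcs_inter n lev hT2m]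
          congr 1
          rw [Set.inter_eq_right.2 (hT2T.trans hTcross)]
      _ ≤ ν {x | lev ≤ psum n n x}
          + ∑ k ∈ Finset.range (n+1), (ν (fcs n lev k ∩ {x | psum n n x < lev})
            + ν (fcs n lev k ∩ {x | lev + δ < psum n k x})) := by
          exact add_le_add le_rfl (Finset.sum_le_sum hperk)
      _ = (ν {x | lev ≤ psum n n x}
            + ∑ k ∈ Finset.range (n+1), ν (fcs n lev k ∩ {x | psum n n x < lev}))
          + ∑ k ∈ Finset.range (n+1), ν (fcs n lev k ∩ {x | lev + δ < psum n k x}) := by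
          rw [Finset.sum_add_distrib]; ring
      _ = ν (cross n lev)
          + ∑ k ∈ Finset.range (n+1), ν (fcs n lev k ∩ {x | lev + δ < psum n k x}) := by
          rw [hcross_split]
  have h2 : 2 * ν {x | lev + 2*δ < psum n n x}
      ≤ ν {x | lev ≤ psum n n x} + ν {x | lev + 2*δ < psum n n x} := by
    rw [two_mul]
    exact add_le_add (measure_mono hT2T) le_rfl
  calc 2 * ν {x | lev + 2*δ < psum n n x}
      ≤ ν {x | lev ≤ psum n n x} + ν {x | lev + 2*δ < psum n n x} := h2
    _ ≤ ν (cross n lev)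
        + ∑ k ∈ Finset.range (n+1), ν (fcs n lev k ∩ {x | lev + δ < psum n k x}) := hmain
    _ ≤ ν (cross n lev) + n * κ (Set.Ioi δ) := by gcongr



lemma gauss_symm (v : ℝ≥0) : (gaussianReal 0 v).map Neg.neg = gaussianReal 0 v := by
  rw [show (Neg.neg : ℝ → ℝ) = fun x : ℝ => (-1 : ℝ) * x from funext fun x => by ring]
  rw [gaussianReal_map_const_mul]
  congr 1
  · ring
  · apply NNReal.coe_injective
    push_cast
    norm_num

lemma gauss_atom (v : ℝ≥0) (hv : v ≠ 0) (a : ℝ) : gaussianReal 0 v {a} = 0 :=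
  gaussianReal_absolutelyContinuous 0 hv (by simp)

lemma gauss_scale {t : ℝ} (ht : 0 < t) (lam : ℝ) :
    gaussianReal 0 t.toNNReal (Set.Ici lam) = gaussianReal 0 1 (Set.Ici (lam / Real.sqrt t)) := by
  have hmap : (gaussianReal 0 1).map (fun x => Real.sqrt t * x) = gaussianReal 0 t.toNNReal := by
    rw [show (fun x : ℝ => Real.sqrt t * x) = fun x : ℝ => Real.sqrt t * x from rfl,
      gaussianReal_map_const_mul]
    congr 1
    · ring
    · apply NNReal.coe_injective
      push_cast
      rw [mul_one, Real.sq_sqrt ht.le, Real.coe_toNNReal _ ht.le]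
  rw [← hmap, Measure.map_apply (measurable_const_mul _) measurableSet_Ici]
  congr 1
  ext x
  simp only [Set.mem_preimage, Set.mem_Ici]
  rw [div_le_iff₀ (Real.sqrt_pos.2 ht), mul_comm]



lemma gauss_tail {v : ℝ≥0} (hv : v ≠ 0) {δ : ℝ} (hδ : 0 ≤ δ) :
    gaussianReal 0 v (Set.Ioi δ) ≤ ENNReal.ofReal (Real.sqrt 2 * Real.exp (-δ^2/(4*(v:ℝ)))) := by
  have hvpos : (0 : ℝ) < (v : ℝ) := lt_of_le_of_ne v.coe_nonneg (by exact_mod_cast hv.symm)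
  rw [gaussianReal_apply_eq_integral 0 hv]
  apply ENNReal.ofReal_le_ofReal
  set V : ℝ := (v : ℝ) with hV
  set c : ℝ := (Real.sqrt (2 * π * V))⁻¹ * Real.exp (-δ^2/(4*V)) with hc
  have hb : (0 : ℝ) < (4*V)⁻¹ := by positivity
  have hg_int : Integrable (fun x : ℝ => c * Real.exp (-((4*V)⁻¹) * x^2)) :=
    (integrable_exp_neg_mul_sq hb).const_mul c
  have hpdf_int : Integrable (gaussianPDFReal 0 v) := integrable_gaussianPDFReal 0 v
  have hpt : ∀ x ∈ Set.Ioi δ, gaussianPDFReal 0 v x ≤ c * Real.exp (-((4*V)⁻¹) * x^2) := by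
    intro x hx
    have hxδ : δ ≤ x := le_of_lt hx
    have hx2 : δ^2 ≤ x^2 := by nlinarith
    have hre : c * Real.exp (-((4*V)⁻¹) * x^2)
        = (Real.sqrt (2 * π * V))⁻¹ * Real.exp (-δ^2/(4*V) + -((4*V)⁻¹) * x^2) := by
      rw [hc, mul_assoc, ← Real.exp_add]
    rw [hre]
    unfold gaussianPDFReal
    apply mul_le_mul_of_nonneg_left _ (by positivity)
    apply Real.exp_le_exp.2
    have hkey : -δ^2/(4*V) + -((4*V)⁻¹) * x^2 - (-(x-0)^2/(2*V)) = (x^2 - δ^2)/(4*V) := by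
      field_simp
      ring
    have hnn : (0:ℝ) ≤ (x^2 - δ^2)/(4*V) :=
      div_nonneg (sub_nonneg.2 hx2) (by positivity)
    linarith
  calc ∫ x in Set.Ioi δ, gaussianPDFReal 0 v x
      ≤ ∫ x in Set.Ioi δ, c * Real.exp (-((4*V)⁻¹) * x^2) :=
        setIntegral_mono_on hpdf_int.integrableOn hg_int.integrableOn measurableSet_Ioi hpt
    _ ≤ ∫ x, c * Real.exp (-((4*V)⁻¹) * x^2) := by
        apply setIntegral_le_integral hg_int
        filter_upwards with x
        positivity
    _ = c * Real.sqrt (π / (4*V)⁻¹) := by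
        rw [MeasureTheory.integral_const_mul, integral_gaussian]
    _ = Real.sqrt 2 * Real.exp (-δ^2/(4*V)) := by
        rw [hc]
        have h1 : π / (4*V)⁻¹ = 2 * (2 * π * V) := by field_simp; ring
        rw [h1, Real.sqrt_mul (by norm_num) (2 * π * V)]
        have h2 : Real.sqrt (2 * π * V) ≠ 0 := by positivity
        field_simp



lemma map_pi_of_iIndep {Ω : Type*} [MeasurableSpace Ω] {P : Measure Ω} [IsProbabilityMeasure P]
    {n : ℕ} {X : Fin n → Ω → ℝ} (hX : ∀ i, Measurable (X i))
    (h : iIndepFun X P)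
    {μs : Fin n → Measure ℝ} [∀ i, IsProbabilityMeasure (μs i)]
    (hlaw : ∀ i, P.map (X i) = μs i) :
    P.map (fun ω i => X i ω) = Measure.pi μs := by
  refine (Measure.pi_eq (fun s hs => ?_)).symm
  rw [Measure.map_apply (measurable_pi_lambda _ hX) (MeasurableSet.univ_pi hs)]
  have hpre : (fun ω i => X i ω) ⁻¹' Set.pi Set.univ s = ⋂ i ∈ Finset.univ, X i ⁻¹' s i := by
    ext ω; simp
  rw [hpre, h.measure_inter_preimage_eq_mul Finset.univ (fun i _ => hs i)]
  refine Finset.prod_congr rfl fun i _ => ?_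
  rw [← hlaw i, Measure.map_apply (hX i) (hs i)]

lemma tendsto_mul_exp_neg {a : ℝ} (ha : 0 < a) :
    Tendsto (fun x : ℝ => x * Real.exp (-(a * x))) atTop (nhds 0) := by
  have h := Real.tendsto_pow_mul_exp_neg_atTop_nhds_zero 1
  have h2 : Tendsto (fun x : ℝ => a * x) atTop atTop :=
    Tendsto.const_mul_atTop ha tendsto_id
  have h3 := h.comp h2
  have h4 : Tendsto (fun x : ℝ => a⁻¹ * ((a*x)^1 * Real.exp (-(a*x)))) atTop (nhds (a⁻¹ * 0)) :=
    h3.const_mul _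
  rw [mul_zero] at h4
  refine h4.congr fun x => ?_
  field_simp




variable {Ω : Type*} [MeasurableSpace Ω] {P : Measure Ω} [IsProbabilityMeasure P]
  {B : ℝ → Ω → ℝ} {t : ℝ}

/-- increments along the dyadic grid of level `m` -/
noncomputable def Xinc (B : ℝ → Ω → ℝ) (t : ℝ) (m : ℕ) (ω : Ω) : Fin (2^m) → ℝ :=
  fun i => B (((i : ℕ) + 1) * (t / 2^m)) ω - B ((i : ℕ) * (t / 2^m)) ω

lemma measurable_Xinc (hB : IsBrownianMotion1 P B) (t : ℝ) (m : ℕ) :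
    Measurable (Xinc B t m) := by
  apply measurable_pi_lambda
  intro i
  exact ((hB.stronglyMeasurable _).measurable).sub ((hB.stronglyMeasurable _).measurable)

lemma Xinc_law (hB : IsBrownianMotion1 P B) (ht : 0 < t) (m : ℕ) :
    P.map (Xinc B t m)
      = Measure.pi (fun _ : Fin (2^m) => gaussianReal 0 (t/2^m).toNNReal) := by
  have hh : (0:ℝ) < t / 2^m := by positivity
  apply map_pi_of_iIndep
  · intro i
    exact ((hB.stronglyMeasurable _).measurable).sub ((hB.stronglyMeasurable _).measurable)
  · have h := hB.indepIncr (2^m) (fun k : Fin (2^m + 1) => (k : ℕ) * (t / 2^m))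
      (fun k k' hkk' => by
        have : ((k : ℕ) : ℝ) ≤ ((k' : ℕ) : ℝ) := by exact_mod_cast hkk'
        exact mul_le_mul_of_nonneg_right this hh.le)
      (by simp)
    convert h using 2 with k ω
    simp only [Xinc, Fin.val_succ, Fin.coe_castSucc]
    push_cast
    ring_nf
  · intro i
    have h := hB.gauss ((i : ℕ) * (t / 2^m)) (((i : ℕ) + 1) * (t / 2^m))
      (by positivity) (by nlinarith [hh.le])
    have harg : (((i : ℕ) + 1) * (t / 2^m) - (i : ℕ) * (t / 2^m)) = t / 2^m := by ring
    rw [harg] at h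
    exact h

lemma psum_Xinc (hB : IsBrownianMotion1 P B) (t : ℝ) (m : ℕ) (ω : Ω) :
    ∀ k, k ≤ 2^m → psum (2^m) k (Xinc B t m ω) = B ((k : ℝ) * (t / 2^m)) ω := by
  intro k
  induction k with
  | zero => intro _; simp [hB.init ω]
  | succ k ih =>
    intro hk
    have hk' : k < 2^m := hk
    rw [psum_succ, dif_pos hk', ih (le_of_lt hk')]
    simp only [Xinc]
    push_cast
    ring_nf



/-- the dyadic crossing event -/
def Edy (B : ℝ → Ω → ℝ) (t : ℝ) (m : ℕ) (lev : ℝ) : Set Ω :=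
  {ω | ∃ j : ℕ, j ≤ 2^m ∧ lev ≤ B ((j : ℝ) * (t / 2^m)) ω}

lemma Edy_eq (hB : IsBrownianMotion1 P B) (m : ℕ) (lev : ℝ) :
    Edy B t m lev = Xinc B t m ⁻¹' cross (2^m) lev := by
  ext ω
  simp only [Edy, cross, Set.mem_preimage, Set.mem_setOf_eq]
  constructor
  · rintro ⟨j, hj, hx⟩
    exact ⟨j, hj, by rw [psum_Xinc hB t m ω j hj]; exact_mod_cast hx⟩
  · rintro ⟨j, hj, hx⟩
    rw [psum_Xinc hB t m ω j hj] at hx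
    exact ⟨j, hj, by exact_mod_cast hx⟩

lemma measurableSet_Edy (hB : IsBrownianMotion1 P B) (m : ℕ) (lev : ℝ) :
    MeasurableSet (Edy B t m lev) := by
  rw [Edy_eq hB m lev]
  exact (measurable_Xinc hB t m) (measurableSet_cross _ _)

lemma measure_Edy (hB : IsBrownianMotion1 P B) (ht : 0 < t) (m : ℕ) (lev : ℝ) :
    P (Edy B t m lev)
      = Measure.pi (fun _ : Fin (2^m) => gaussianReal 0 (t/2^m).toNNReal)
          (cross (2^m) lev) := by
  rw [Edy_eq hB m lev, ← Xinc_law hB ht m,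
    Measure.map_apply (measurable_Xinc hB t m) (measurableSet_cross _ _)]

lemma psum_Xinc_top (hB : IsBrownianMotion1 P B) (ht : 0 < t) (m : ℕ) (ω : Ω) :
    psum (2^m) (2^m) (Xinc B t m ω) = B t ω := by
  rw [psum_Xinc hB t m ω (2^m) le_rfl]
  congr 1
  push_cast
  field_simp

lemma measure_Bt_le (hB : IsBrownianMotion1 P B) (ht : 0 < t) (m : ℕ) (c : ℝ) :
    P {ω | c ≤ B t ω}
      = Measure.pi (fun _ : Fin (2^m) => gaussianReal 0 (t/2^m).toNNReal)
          {x | c ≤ psum (2^m) (2^m) x} := by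
  have hset : {ω | c ≤ B t ω} = Xinc B t m ⁻¹' {x | c ≤ psum (2^m) (2^m) x} := by
    ext ω
    simp only [Set.mem_preimage, Set.mem_setOf_eq, psum_Xinc_top hB ht m ω]
  rw [hset, ← Xinc_law hB ht m, Measure.map_apply (measurable_Xinc hB t m)
    (measurableSet_le measurable_const (measurable_psum _ _))]

lemma measure_Bt_lt (hB : IsBrownianMotion1 P B) (ht : 0 < t) (m : ℕ) (c : ℝ) :
    P {ω | c < B t ω}
      = Measure.pi (fun _ : Fin (2^m) => gaussianReal 0 (t/2^m).toNNReal)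
          {x | c < psum (2^m) (2^m) x} := by
  have hset : {ω | c < B t ω} = Xinc B t m ⁻¹' {x | c < psum (2^m) (2^m) x} := by
    ext ω
    simp only [Set.mem_preimage, Set.mem_setOf_eq, psum_Xinc_top hB ht m ω]
  rw [hset, ← Xinc_law hB ht m, Measure.map_apply (measurable_Xinc hB t m)
    (measurableSet_lt measurable_const (measurable_psum _ _))]

lemma law_Bt (hB : IsBrownianMotion1 P B) (ht : 0 < t) :
    P.map (B t) = gaussianReal 0 t.toNNReal := by
  have h := hB.gauss 0 t le_rfl ht.le
  have hfun : (fun ω => B t ω - B 0 ω) = B t := by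
    funext ω; rw [hB.init ω, sub_zero]
  rw [hfun, sub_zero] at h
  exact h

lemma Edy_mono (hB : IsBrownianMotion1 P B) (ht : 0 < t) (lev : ℝ) :
    Monotone (fun m => Edy B t m lev) := by
  apply monotone_nat_of_le_succ
  intro m
  rintro ω ⟨j, hj, hx⟩
  refine ⟨2*j, by omega, ?_⟩
  have harg : ((2*j : ℕ) : ℝ) * (t / 2^(m+1)) = (j : ℝ) * (t / 2^m) := by
    push_cast
    field_simp
    ring
  rw [harg]
  exact hx

/-- Main identity for the union over all dyadic levels -/
lemma measure_U (hB : IsBrownianMotion1 P B) (ht : 0 < t) {lev : ℝ} (hlev : 0 < lev) :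
    P (⋃ m, Edy B t m lev) = 2 * P {ω | lev ≤ B t ω} := by
  have hhalf : ∀ m : ℕ, (0:ℝ) < t / 2^m := fun m => by positivity
  have hvne : ∀ m : ℕ, (t/2^m).toNNReal ≠ 0 :=
    fun m => by simp [Real.toNNReal_eq_zero, not_le, hhalf m]
  have hPU : P (⋃ m, Edy B t m lev) = ⨆ m, P (Edy B t m lev) :=
    (Edy_mono hB ht lev).measure_iUnion
  -- upper bound
  have hupper : P (⋃ m, Edy B t m lev) ≤ 2 * P {ω | lev ≤ B t ω} := by
    rw [hPU]
    refine iSup_le fun m => ?_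
    rw [measure_Edy hB ht m lev, measure_Bt_le hB ht m lev]
    exact cross_upper (gauss_symm _) _ hlev
  -- lower bound
  have hlower : ∀ k : ℕ, 2 * P {ω | lev + 2*((k:ℝ)+1)⁻¹ < B t ω}
      ≤ P (⋃ m, Edy B t m lev) := by
    intro k
    set δ : ℝ := ((k:ℝ)+1)⁻¹ with hδdef
    have hδ : 0 < δ := by positivity
    set a : ℝ := δ^2 / (4*t) with ha
    have hapos : 0 < a := by positivity
    set d : ℕ → ℝ≥0∞ := fun m =>
      ENNReal.ofReal ((2^m : ℝ) * (Real.sqrt 2 * Real.exp (-(a * 2^m)))) with hd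
    have hstep : ∀ m : ℕ, 2 * P {ω | lev + 2*δ < B t ω} ≤ P (⋃ m, Edy B t m lev) + d m := by
      intro m
      have h1 : 2 * P {ω | lev + 2*δ < B t ω}
          ≤ P (Edy B t m lev) + (2^m : ℕ) * (gaussianReal 0 (t/2^m).toNNReal) (Set.Ioi δ) := by
        rw [measure_Edy hB ht m lev, measure_Bt_lt hB ht m (lev + 2*δ)]
        exact cross_lower (gauss_symm _) _ hlev hδ
      have h2 : (2^m : ℕ) * (gaussianReal 0 (t/2^m).toNNReal) (Set.Ioi δ) ≤ d m := by
        have htail := gauss_tail (hvne m) hδ.le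
        have hco : (((t/2^m).toNNReal : ℝ)) = t/2^m := Real.coe_toNNReal _ (hhalf m).le
        rw [hco] at htail
        have hexp : -δ^2/(4*(t/2^m)) = -(a * 2^m) := by
          rw [ha]
          field_simp
        rw [hexp] at htail
        calc (2^m : ℕ) * (gaussianReal 0 (t/2^m).toNNReal) (Set.Ioi δ)
            ≤ (2^m : ℕ) * ENNReal.ofReal (Real.sqrt 2 * Real.exp (-(a * 2^m))) := by
              gcongr
          _ = d m := by
              rw [hd, ← ENNReal.ofReal_natCast (2^m), ← ENNReal.ofReal_mul (by positivity)]
              push_cast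
              ring_nf
      calc 2 * P {ω | lev + 2*δ < B t ω}
          ≤ P (Edy B t m lev) + (2^m : ℕ) * (gaussianReal 0 (t/2^m).toNNReal) (Set.Ioi δ) := h1
        _ ≤ P (⋃ m, Edy B t m lev) + d m :=
            add_le_add (measure_mono (Set.subset_iUnion (fun i => Edy B t i lev) m)) h2
    have hd0 : Tendsto d atTop (𝓝 0) := by
      rw [hd]
      have hreal : Tendsto (fun m : ℕ => (2^m : ℝ) * (Real.sqrt 2 * Real.exp (-(a * 2^m))))
          atTop (𝓝 0) := by
        have hbase : Tendsto (fun m : ℕ => (2:ℝ)^m) atTop atTop :=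
          tendsto_pow_atTop_atTop_of_one_lt one_lt_two
        have h := (tendsto_mul_exp_neg hapos).comp hbase
        have h2 := h.const_mul (Real.sqrt 2)
        rw [mul_zero] at h2
        refine h2.congr fun m => ?_
        simp only [Function.comp]
        ring
      have := ENNReal.tendsto_ofReal hreal
      rwa [ENNReal.ofReal_zero] at this
    have hfin : Tendsto (fun m => P (⋃ m, Edy B t m lev) + d m) atTop
        (𝓝 (P (⋃ m, Edy B t m lev) + 0)) := Tendsto.const_add _ hd0
    rw [add_zero] at hfin
    exact ge_of_tendsto' hfin hstep
  -- pass to limit in δ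
  have hDmono : Monotone (fun k : ℕ => {ω | lev + 2*((k:ℝ)+1)⁻¹ < B t ω}) := by
    intro k k' hkk' ω hω
    simp only [Set.mem_setOf_eq] at hω ⊢
    have : ((k':ℝ)+1)⁻¹ ≤ ((k:ℝ)+1)⁻¹ := by
      apply inv_anti₀ (by positivity)
      exact_mod_cast add_le_add_left (Nat.cast_le.2 hkk') 1
    linarith
  have hDunion : (⋃ k : ℕ, {ω | lev + 2*((k:ℝ)+1)⁻¹ < B t ω}) = {ω | lev < B t ω} := by
    ext ω
    simp only [Set.mem_iUnion, Set.mem_setOf_eq]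
    constructor
    · rintro ⟨k, hk⟩
      have : (0:ℝ) < 2*((k:ℝ)+1)⁻¹ := by positivity
      linarith
    · intro hω
      obtain ⟨k, hk⟩ := exists_nat_one_div_lt (by linarith : (0:ℝ) < (B t ω - lev)/2)
      refine ⟨k, ?_⟩
      rw [one_div] at hk
      linarith
  have hlt : 2 * P {ω | lev < B t ω} ≤ P (⋃ m, Edy B t m lev) := by
    have := hDmono.measure_iUnion (μ := P)
    rw [hDunion] at this
    rw [this, ENNReal.mul_iSup]
    exact iSup_le hlower
  -- no atoms
  have hatom : P {ω | lev ≤ B t ω} = P {ω | lev < B t ω} := by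
    have h0 : P {ω | B t ω = lev} = 0 := by
      have : {ω | B t ω = lev} = B t ⁻¹' {lev} := rfl
      rw [this, ← Measure.map_apply ((hB.stronglyMeasurable t).measurable)
        (measurableSet_singleton lev), law_Bt hB ht]
      exact gauss_atom _ (by simp [Real.toNNReal_eq_zero, not_le, ht]) lev
    apply le_antisymm
    · have hsub : {ω | lev ≤ B t ω} ⊆ {ω | lev < B t ω} ∪ {ω | B t ω = lev} := by
        intro ω hω
        have hω' : lev ≤ B t ω := hω
        rcases lt_or_eq_of_le hω' with h | h
        · exact Or.inl h
        · exact Or.inr h.symm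
      calc P {ω | lev ≤ B t ω} ≤ P ({ω | lev < B t ω} ∪ {ω | B t ω = lev}) := measure_mono hsub
        _ ≤ P {ω | lev < B t ω} + P {ω | B t ω = lev} := measure_union_le _ _
        _ = P {ω | lev < B t ω} := by rw [h0, add_zero]
    · exact measure_mono fun ω (hω : lev < B t ω) => le_of_lt hω
  refine le_antisymm hupper ?_
  rw [hatom]
  exact hlt


end RPaux

open RPaux
open scoped NNReal ENNReal Topology

theorem reflection_principle
    {Ω : Type*} [MeasurableSpace Ω] (P : Measure Ω) [IsProbabilityMeasure P]
    (B : ℝ → Ω → ℝ) (hB : IsBrownianMotion1 P B)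
    (t lam : ℝ) (ht : 0 < t) (hlam : 0 < lam) :
    P {ω | ∃ s ∈ Set.Icc (0 : ℝ) t, lam ≤ B s ω}
      = ENNReal.ofReal (2 * (1 - stdNormalCDF (lam / Real.sqrt t))) := by
  -- the sequence of levels
  set lv : ℕ → ℝ := fun k => lam - ((k:ℝ)+1)⁻¹ with hlv
  -- STEP 1 : the event is the intersection of the dyadic crossing unions
  have hset : {ω | ∃ s ∈ Set.Icc (0 : ℝ) t, lam ≤ B s ω}
      = ⋂ k : ℕ, ⋃ m, Edy B t m (lv k) := by
    ext ω
    simp only [Set.mem_setOf_eq, Set.mem_iInter, Set.mem_iUnion]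
    constructor
    · rintro ⟨s, ⟨hs0, hst⟩, hBs⟩ k
      set ε : ℝ := ((k:ℝ)+1)⁻¹ with hε
      have hεpos : 0 < ε := by positivity
      -- continuity at s
      have hcont : ContinuousAt (fun u => B u ω) s := (hB.cont ω).continuousAt
      rw [Metric.continuousAt_iff] at hcont
      obtain ⟨η, hη, hball⟩ := hcont ε hεpos
      -- choose m with t / 2^m < η
      obtain ⟨m, hm⟩ := pow_unbounded_of_one_lt (t/η) (one_lt_two (α := ℝ))
      have hmesh : t / 2^m < η := by
        rw [div_lt_iff₀ (by positivity : (0:ℝ) < 2^m)]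
        rw [div_lt_iff₀ hη] at hm
        linarith [hm]
      refine ⟨m, ⟨⌊s * 2^m / t⌋₊, ?_, ?_⟩⟩
      · -- j ≤ 2^m
        have h1 : s * 2^m / t ≤ (((2^m : ℕ) : ℝ)) := by
          rw [div_le_iff₀ ht]
          push_cast
          nlinarith [hst, (by positivity : (0:ℝ) < 2^m)]
        have h2 := Nat.floor_le_floor h1
        rwa [Nat.floor_natCast] at h2
      · -- value bound
        set j : ℕ := ⌊s * 2^m / t⌋₊ with hj
        set u : ℝ := (j : ℝ) * (t / 2^m) with hu
        have hq0 : 0 ≤ s * 2^m / t := by positivity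
        have hcancel : (s * 2^m / t) * (t / 2^m) = s := by
          field_simp
        have hle : u ≤ s := by
          rw [hu, ← hcancel]
          apply mul_le_mul_of_nonneg_right (Nat.floor_le hq0) (by positivity)
        have hlt : s - u < t / 2^m := by
          have h3 : s * 2^m / t < (j:ℝ) + 1 := Nat.lt_floor_add_one (s * 2^m / t)
          have h5 := mul_lt_mul_of_pos_right h3 (by positivity : (0:ℝ) < t / 2^m)
          rw [hcancel] at h5
          rw [hu]
          have hexp : ((j:ℝ) + 1) * (t / 2^m) = (j:ℝ) * (t / 2^m) + t / 2^m := by ring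
          rw [hexp] at h5
          linarith
        have hdist : dist u s < η := by
          rw [Real.dist_eq, abs_sub_lt_iff]
          constructor <;> [linarith; linarith]
        have hBu := hball hdist
        rw [Real.dist_eq, abs_sub_lt_iff] at hBu
        have : B s ω - B u ω < ε := hBu.2
        simp only [hlv]
        linarith
    · intro hω
      obtain ⟨s₀, hs₀mem, hs₀max⟩ := isCompact_Icc.exists_isMaxOn
        (Set.nonempty_Icc.2 ht.le) (hB.cont ω).continuousOn
      refine ⟨s₀, hs₀mem, ?_⟩
      by_contra hcon
      push_neg at hcon
      obtain ⟨k, hk⟩ := exists_nat_one_div_lt (by linarith : (0:ℝ) < lam - B s₀ ω)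
      obtain ⟨m, j, hj, hBj⟩ := hω k
      have hj' : (j : ℝ) ≤ ((2:ℝ))^m := by exact_mod_cast hj
      have e1 : (j:ℝ) * (t / 2^m) ≤ (2:ℝ)^m * (t / 2^m) :=
        mul_le_mul_of_nonneg_right hj' (by positivity)
      have e2 : (2:ℝ)^m * (t / 2^m) = t := by field_simp
      have humem : (j : ℝ) * (t / 2^m) ∈ Set.Icc (0:ℝ) t := by
        constructor
        · positivity
        · linarith
      have hmax : B ((j : ℝ) * (t / 2^m)) ω ≤ B s₀ ω := hs₀max humem
      rw [one_div] at hk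
      simp only [hlv] at hBj
      linarith
  rw [hset]
  -- STEP 2 : limit over k
  have hK : ∃ K : ℕ, ((K:ℝ)+1)⁻¹ < lam := by
    obtain ⟨K, hK⟩ := exists_nat_one_div_lt hlam
    exact ⟨K, by rwa [one_div] at hK⟩
  obtain ⟨K, hKlt⟩ := hK
  have hlv_pos : ∀ k ≥ K, 0 < lv k := by
    intro k hk
    have : ((k:ℝ)+1)⁻¹ ≤ ((K:ℝ)+1)⁻¹ := by
      apply inv_anti₀ (by positivity)
      exact_mod_cast add_le_add_left (Nat.cast_le.2 hk) 1
    simp only [hlv]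
    linarith
  have hanti : Antitone (fun k : ℕ => ⋃ m, Edy B t m (lv k)) := by
    intro k k' hkk'
    apply Set.iUnion_mono
    intro m
    rintro ω ⟨j, hj, hx⟩
    refine ⟨j, hj, le_trans ?_ hx⟩
    simp only [hlv]
    have : ((k':ℝ)+1)⁻¹ ≤ ((k:ℝ)+1)⁻¹ := by
      apply inv_anti₀ (by positivity)
      exact_mod_cast add_le_add_left (Nat.cast_le.2 hkk') 1
    linarith
  have hiInter : Tendsto (fun k => P (⋃ m, Edy B t m (lv k))) atTop
      (𝓝 (P (⋂ k, ⋃ m, Edy B t m (lv k)))) := by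
    have := tendsto_measure_iInter_atTop (μ := P)
      (fun k => (MeasurableSet.iUnion (fun m => measurableSet_Edy hB m (lv k))).nullMeasurableSet)
      hanti ⟨0, measure_ne_top _ _⟩
    exact this
  -- the other limit
  have hGanti : Antitone (fun k : ℕ => {ω | lv k ≤ B t ω}) := by
    intro k k' hkk' ω hω
    simp only [Set.mem_setOf_eq] at hω ⊢
    refine le_trans ?_ hω
    simp only [hlv]
    have : ((k':ℝ)+1)⁻¹ ≤ ((k:ℝ)+1)⁻¹ := by
      apply inv_anti₀ (by positivity)
      exact_mod_cast add_le_add_left (Nat.cast_le.2 hkk') 1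
    linarith
  have hGinter : (⋂ k : ℕ, {ω | lv k ≤ B t ω}) = {ω | lam ≤ B t ω} := by
    ext ω
    simp only [Set.mem_iInter, Set.mem_setOf_eq]
    constructor
    · intro h
      by_contra hcon
      push_neg at hcon
      obtain ⟨k, hk⟩ := exists_nat_one_div_lt (by linarith : (0:ℝ) < lam - B t ω)
      rw [one_div] at hk
      have := h k
      simp only [hlv] at this
      linarith
    · intro h k
      simp only [hlv]
      have : (0:ℝ) < ((k:ℝ)+1)⁻¹ := by positivity
      linarith
  have hGtendsto : Tendsto (fun k => P {ω | lv k ≤ B t ω}) atTop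
      (𝓝 (P {ω | lam ≤ B t ω})) := by
    have hmeas : ∀ k : ℕ, NullMeasurableSet {ω | lv k ≤ B t ω} P := fun k =>
      (measurableSet_le measurable_const (hB.stronglyMeasurable t).measurable).nullMeasurableSet
    have := tendsto_measure_iInter_atTop (μ := P) hmeas hGanti ⟨0, measure_ne_top _ _⟩
    rwa [hGinter] at this
  have h2G : Tendsto (fun k => 2 * P {ω | lv k ≤ B t ω}) atTop
      (𝓝 (2 * P {ω | lam ≤ B t ω})) :=
    ENNReal.Tendsto.const_mul hGtendsto (Or.inr (by norm_num))
  have heq : (fun k => P (⋃ m, Edy B t m (lv k))) =ᶠ[atTop]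
      (fun k => 2 * P {ω | lv k ≤ B t ω}) := by
    filter_upwards [eventually_ge_atTop K] with k hk
    exact measure_U hB ht (hlv_pos k hk)
  have hlimit : P (⋂ k, ⋃ m, Edy B t m (lv k)) = 2 * P {ω | lam ≤ B t ω} :=
    tendsto_nhds_unique (hiInter.congr' heq) h2G
  rw [hlimit]
  -- STEP 3 : gaussian computation
  have hPle : P {ω | lam ≤ B t ω} = gaussianReal 0 1 (Set.Ici (lam / Real.sqrt t)) := by
    have : {ω | lam ≤ B t ω} = B t ⁻¹' Set.Ici lam := rfl
    rw [this, ← Measure.map_apply (hB.stronglyMeasurable t).measurable measurableSet_Ici,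
      law_Bt hB ht, gauss_scale ht lam]
  rw [hPle]
  set y : ℝ := lam / Real.sqrt t with hy
  have hIci : gaussianReal 0 1 (Set.Ici y) = ENNReal.ofReal (1 - stdNormalCDF y) := by
    have hIoi : gaussianReal 0 1 (Set.Ici y) = gaussianReal 0 1 (Set.Ioi y) := by
      rw [← Set.Ioi_union_left]
      refine le_antisymm ?_ (measure_mono Set.subset_union_left)
      calc gaussianReal 0 1 (Set.Ioi y ∪ {y})
          ≤ gaussianReal 0 1 (Set.Ioi y) + gaussianReal 0 1 {y} := measure_union_le _ _
        _ = gaussianReal 0 1 (Set.Ioi y) := by rw [gauss_atom 1 one_ne_zero y, add_zero]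
    have hcompl : gaussianReal 0 1 (Set.Ioi y) = 1 - gaussianReal 0 1 (Set.Iic y) := by
      rw [← Set.compl_Iic, measure_compl measurableSet_Iic (measure_ne_top _ _), measure_univ]
    have hfin : gaussianReal 0 1 (Set.Iic y) ≠ ⊤ := measure_ne_top _ _
    have hle1 : gaussianReal 0 1 (Set.Iic y) ≤ 1 := prob_le_one
    have hkey : (1:ℝ≥0∞) - gaussianReal 0 1 (Set.Iic y)
        = ENNReal.ofReal (1 - (gaussianReal 0 1 (Set.Iic y)).toReal) := by
      rw [ENNReal.ofReal_sub _ ENNReal.toReal_nonneg, ENNReal.ofReal_toReal hfin,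
        ENNReal.ofReal_one]
    rw [hIoi, hcompl, hkey]
    simp only [stdNormalCDF]
  rw [hIci, ← ENNReal.ofReal_ofNat 2, ← ENNReal.ofReal_mul (by norm_num)]
end

section
/- Let B be a standard Brownian motion in ℝ^m started at 0, let x ∈ ℝ^m, let a > ‖x‖, and let τ_{x,a} be the first exit time of B^x = x + B from the open ball D_{0,a}. Then for every t > 0, P( τ_{x,a} > t ) ≤ 2Φ( (‖x‖ + a)/√t ) − 1, where Φ is the standard normal cumulative distribution function. In particular, the family of first exit times {τ_{x,a} : ‖x‖ ≤ r̄, a ∈ (r̄, r̃)} is tight, for any 0 < r̄ < r̃. -/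
open MeasureTheory Metric Filter ProbabilityTheory

noncomputable def sphereMeasure (m : ℕ) (y : EuclideanSpace ℝ (Fin m)) (r : ℝ) :
    Measure (EuclideanSpace ℝ (Fin m)) :=
  (Measure.hausdorffMeasure ((m : ℝ) - 1)).restrict (Metric.sphere y r)

noncomputable def uniformSphere (m : ℕ) (y : EuclideanSpace ℝ (Fin m)) (r : ℝ) :
    Measure (EuclideanSpace ℝ (Fin m)) :=
  (sphereMeasure m y r Set.univ)⁻¹ • sphereMeasure m y r

def HarmonicOn {m : ℕ} (u : EuclideanSpace ℝ (Fin m) → ℝ)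
    (A : Set (EuclideanSpace ℝ (Fin m))) : Prop :=
  ContDiffOn ℝ 2 u A ∧ ∀ x ∈ A,
    (∑ i : Fin m, fderiv ℝ (fun w => fderiv ℝ u w (EuclideanSpace.single i 1)) x
      (EuclideanSpace.single i 1)) = 0

structure IsBrownianMotion {Ω : Type*} [MeasurableSpace Ω] (P : Measure Ω)
    {m : ℕ} (B : ℝ → Ω → EuclideanSpace ℝ (Fin m)) : Prop where
  stronglyMeasurable : ∀ t, StronglyMeasurable (B t)
  init : ∀ ω, B 0 ω = 0
  cont : ∀ ω, Continuous fun t => B t ω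
  gauss : ∀ (i : Fin m) (s t : ℝ), 0 ≤ s → s ≤ t →
    P.map (fun ω => B t ω i - B s ω i) = gaussianReal 0 ((t - s).toNNReal)
  indepCoords : ∀ (s t : ℝ), 0 ≤ s → s ≤ t →
    iIndepFun (fun (i : Fin m) ω => B t ω i - B s ω i) P
  indepIncr : ∀ (n : ℕ) (t : Fin (n + 1) → ℝ), Monotone t → 0 ≤ t 0 →
    iIndepFun
      (fun (k : Fin n) ω => B (t k.succ) ω - B (t k.castSucc) ω) P

noncomputable def exitTime {Ω : Type*} {m : ℕ}
    (B : ℝ → Ω → EuclideanSpace ℝ (Fin m)) (r : ℝ) (ω : Ω) : ℝ :=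
  sInf {t : ℝ | 0 ≤ t ∧ r ≤ ‖B t ω‖}

section Aux

open Real

lemma aux_gauss_scale {t : ℝ} (ht : 0 < t) :
    (gaussianReal 0 1).map (Real.sqrt t * ·) = gaussianReal 0 t.toNNReal := by
  rw [gaussianReal_map_const_mul]
  congr 1
  · ring
  · ext
    simp [Real.sq_sqrt ht.le, ht.le]

lemma aux_scale_Iic {t : ℝ} (ht : 0 < t) (y : ℝ) :
    gaussianReal 0 t.toNNReal (Set.Iic y) = gaussianReal 0 1 (Set.Iic (y / Real.sqrt t)) := by
  have hs : (0:ℝ) < Real.sqrt t := Real.sqrt_pos.2 ht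
  rw [← aux_gauss_scale ht,
    Measure.map_apply (measurable_const_mul _) measurableSet_Iic]
  congr 1
  ext z
  simp only [Set.mem_preimage, Set.mem_Iic]
  rw [← le_div_iff₀' hs]

lemma aux_gauss_symm (u : ℝ) :
    gaussianReal 0 1 (Set.Iic (-u)) = gaussianReal 0 1 (Set.Ici u) := by
  have h : (gaussianReal 0 1).map ((-1 : ℝ) * ·) = gaussianReal 0 1 := by
    rw [gaussianReal_map_const_mul]
    congr 1 <;> [ring; (ext; simp)]
  conv_lhs => rw [← h, Measure.map_apply (measurable_const_mul _) measurableSet_Iic]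
  congr 1
  ext z
  simp only [Set.mem_preimage, Set.mem_Iic, Set.mem_Ici]
  constructor <;> intro <;> linarith

lemma aux_stdNormalCDF_symm (u : ℝ) : stdNormalCDF (-u) = 1 - stdNormalCDF u := by
  unfold stdNormalCDF
  have hatom : gaussianReal 0 1 {u} = 0 :=
    gaussianReal_absolutelyContinuous 0 one_ne_zero (volume_singleton)
  have h1 : gaussianReal 0 1 (Set.Ici u) = gaussianReal 0 1 (Set.Ioi u) := by
    refine le_antisymm ?_ (measure_mono Set.Ioi_subset_Ici_self)
    calc gaussianReal 0 1 (Set.Ici u) = gaussianReal 0 1 ({u} ∪ Set.Ioi u) := by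
            rw [Set.singleton_union, Set.Ioi_insert]
      _ ≤ gaussianReal 0 1 {u} + gaussianReal 0 1 (Set.Ioi u) := measure_union_le _ _
      _ = gaussianReal 0 1 (Set.Ioi u) := by rw [hatom, zero_add]
  have h2 : gaussianReal 0 1 (Set.Iic u) + gaussianReal 0 1 (Set.Ioi u) = 1 := by
    have := measure_add_measure_compl (μ := gaussianReal 0 1) (measurableSet_Iic (a := u))
    rwa [Set.compl_Iic, measure_univ] at this
  rw [aux_gauss_symm, h1]
  have hfin : ∀ s : Set ℝ, gaussianReal 0 1 s ≠ ⊤ := fun s => measure_ne_top _ s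
  have := congrArg ENNReal.toReal h2
  rw [ENNReal.toReal_add (hfin _) (hfin _), ENNReal.toReal_one] at this
  linarith

lemma aux_stdNormalCDF_mono : Monotone stdNormalCDF := fun u v h =>
  ENNReal.toReal_mono (measure_ne_top _ _) (measure_mono (Set.Iic_subset_Iic.2 h))

lemma aux_gauss_Ioc_le (u : ℝ) (hu : 0 ≤ u) :
    gaussianReal 0 1 (Set.Ioc (-u) u) ≤ ENNReal.ofReal u := by
  rw [gaussianReal_apply 0 one_ne_zero]
  have hpdf : ∀ x : ℝ, gaussianPDF 0 1 x ≤ ENNReal.ofReal (1/2) := by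
    intro x
    rw [gaussianPDF_def]
    apply ENNReal.ofReal_le_ofReal
    have h2 : (2:ℝ) ≤ Real.sqrt (2 * π * (1:NNReal)) := by
      rw [NNReal.coe_one, mul_one]
      have h4 : (4:ℝ) ≤ 2 * π := by nlinarith [Real.pi_gt_three]
      calc (2:ℝ) = Real.sqrt 4 := by
            rw [show (4:ℝ) = 2^2 by norm_num, Real.sqrt_sq (by norm_num)]
        _ ≤ Real.sqrt (2 * π) := Real.sqrt_le_sqrt h4
    calc gaussianPDFReal 0 1 x ≤ (Real.sqrt (2 * π * (1:NNReal)))⁻¹ * 1 := by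
          unfold gaussianPDFReal
          gcongr
          apply Real.exp_le_one_iff.2
          simp only [NNReal.coe_one, mul_one, sub_zero]
          nlinarith [sq_nonneg x]
      _ ≤ 1/2 := by
          rw [mul_one, show (1/2:ℝ) = (2:ℝ)⁻¹ by norm_num]
          exact inv_anti₀ (by norm_num) h2
  calc ∫⁻ x in Set.Ioc (-u) u, gaussianPDF 0 1 x
      ≤ ∫⁻ _ in Set.Ioc (-u) u, ENNReal.ofReal (1/2) :=
        setLIntegral_mono (by measurability) (fun x _ => hpdf x)
    _ = ENNReal.ofReal (1/2) * volume (Set.Ioc (-u) u) := setLIntegral_const _ _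
    _ ≤ ENNReal.ofReal u := by
        rw [Real.volume_Ioc, ← ENNReal.ofReal_mul (by norm_num)]
        apply ENNReal.ofReal_le_ofReal
        linarith

lemma aux_twoPhi_le {u : ℝ} (hu : 0 ≤ u) : 2 * stdNormalCDF u - 1 ≤ u := by
  have hsub : Set.Iic (-u) ⊆ Set.Iic u := Set.Iic_subset_Iic.2 (by linarith)
  have hd : (gaussianReal 0 1 (Set.Ioc (-u) u)).toReal = stdNormalCDF u - stdNormalCDF (-u) := by
    rw [show Set.Ioc (-u) u = Set.Iic u \ Set.Iic (-u) by ext; simp [and_comm],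
      measure_diff hsub measurableSet_Iic.nullMeasurableSet (measure_ne_top _ _),
      ENNReal.toReal_sub_of_le (measure_mono hsub) (measure_ne_top _ _)]
    rfl
  have hb : (gaussianReal 0 1 (Set.Ioc (-u) u)).toReal ≤ u := by
    calc (gaussianReal 0 1 (Set.Ioc (-u) u)).toReal
        ≤ (ENNReal.ofReal u).toReal :=
          ENNReal.toReal_mono ENNReal.ofReal_ne_top (aux_gauss_Ioc_le u hu)
      _ = u := ENNReal.toReal_ofReal hu
  have hs := aux_stdNormalCDF_symm u
  linarith

lemma aux_coord_le {m : ℕ} (v : EuclideanSpace ℝ (Fin m)) (i : Fin m) : |v i| ≤ ‖v‖ := by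
  rw [EuclideanSpace.norm_eq]
  calc |v i| = Real.sqrt (‖v i‖^2) := by
        rw [Real.norm_eq_abs, Real.sqrt_sq_eq_abs, abs_abs]
    _ ≤ _ := Real.sqrt_le_sqrt (Finset.single_le_sum
        (f := fun j => ‖v j‖^2) (fun j _ => sq_nonneg _) (Finset.mem_univ i))

lemma aux_tail_bound
    {Ω : Type*} [MeasurableSpace Ω] (P : Measure Ω) [IsProbabilityMeasure P]
    {m : ℕ} (hm : 1 ≤ m) (B : ℝ → Ω → EuclideanSpace ℝ (Fin m))
    (hB : IsBrownianMotion P B)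
    (x : EuclideanSpace ℝ (Fin m)) (a : ℝ) (hxa : ‖x‖ < a) (t : ℝ) (ht : 0 < t) :
    P {ω | t < exitTime (fun s ω => x + B s ω) a ω}
      ≤ ENNReal.ofReal (2 * stdNormalCDF ((‖x‖ + a) / Real.sqrt t) - 1) := by
  set c : ℝ := ‖x‖ + a with hc
  have hc0 : 0 < c := by have := norm_nonneg x; simp only [hc]; linarith
  have hst : (0:ℝ) < Real.sqrt t := Real.sqrt_pos.2 ht
  set i : Fin m := ⟨0, hm⟩
  have hsub : {ω | t < exitTime (fun s ω => x + B s ω) a ω}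
      ⊆ {ω | B t ω i ∈ Set.Ioc (-c) c} := by
    intro ω hω
    simp only [Set.mem_setOf_eq] at hω ⊢
    have hlt : ‖x + B t ω‖ < a := by
      by_contra h
      push_neg at h
      have hle : exitTime (fun s ω => x + B s ω) a ω ≤ t :=
        csInf_le ⟨0, fun s hs => hs.1⟩ ⟨ht.le, h⟩
      linarith
    have h1 : |x i + B t ω i| < a := by
      have : (x + B t ω) i = x i + B t ω i := rfl
      simpa [this] using lt_of_le_of_lt (aux_coord_le (x + B t ω) i) hlt
    have h2 : |x i| ≤ ‖x‖ := aux_coord_le x i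
    have habs : |B t ω i| < c := by
      calc |B t ω i| = |(x i + B t ω i) - x i| := by ring_nf
        _ ≤ |x i + B t ω i| + |x i| := abs_sub _ _
        _ < a + ‖x‖ := by
            have := abs_nonneg (x i)
            linarith [h1, h2]
        _ = c := by rw [hc]; ring
    rcases abs_lt.1 habs with ⟨hl, hr⟩
    exact ⟨hl, hr.le⟩
  have hmeas : Measurable fun ω => B t ω i :=
    (EuclideanSpace.proj i : EuclideanSpace ℝ (Fin m) →L[ℝ] ℝ).continuous.measurable.comp (hB.stronglyMeasurable t).measurable
  have hmap : P.map (fun ω => B t ω i) = gaussianReal 0 t.toNNReal := by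
    have hg := hB.gauss i 0 t le_rfl ht.le
    have hfun : (fun ω => B t ω i - B 0 ω i) = fun ω => B t ω i := by
      funext ω
      rw [hB.init ω]
      simp
    rw [hfun, sub_zero] at hg
    exact hg
  have hsubIic : Set.Iic (-c) ⊆ Set.Iic c := Set.Iic_subset_Iic.2 (by linarith)
  calc P {ω | t < exitTime (fun s ω => x + B s ω) a ω}
      ≤ P {ω | B t ω i ∈ Set.Ioc (-c) c} := measure_mono hsub
    _ = gaussianReal 0 t.toNNReal (Set.Ioc (-c) c) := by
        rw [← hmap, Measure.map_apply hmeas measurableSet_Ioc]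
        rfl
    _ = gaussianReal 0 t.toNNReal (Set.Iic c) - gaussianReal 0 t.toNNReal (Set.Iic (-c)) := by
        rw [show Set.Ioc (-c) c = Set.Iic c \ Set.Iic (-c) by ext; simp [and_comm],
          measure_diff hsubIic measurableSet_Iic.nullMeasurableSet (measure_ne_top _ _)]
    _ = gaussianReal 0 1 (Set.Iic (c / Real.sqrt t))
        - gaussianReal 0 1 (Set.Iic (-(c / Real.sqrt t))) := by
        rw [aux_scale_Iic ht, aux_scale_Iic ht, neg_div]
    _ ≤ ENNReal.ofReal (2 * stdNormalCDF (c / Real.sqrt t) - 1) := by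
        set u : ℝ := c / Real.sqrt t with hu
        have hu0 : 0 ≤ u := by positivity
        have hmono : stdNormalCDF (-u) ≤ stdNormalCDF u :=
          aux_stdNormalCDF_mono (by linarith)
        have hsymm := aux_stdNormalCDF_symm u
        have hIic : ∀ y : ℝ, gaussianReal 0 1 (Set.Iic y) = ENNReal.ofReal (stdNormalCDF y) :=
          fun y => (ENNReal.ofReal_toReal (measure_ne_top _ _)).symm
        rw [hIic u, hIic (-u), tsub_le_iff_right,
          ← ENNReal.ofReal_add (by linarith) (by
            have : 0 ≤ (gaussianReal 0 1 (Set.Iic (-u))).toReal := ENNReal.toReal_nonneg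
            exact this)]
        apply ENNReal.ofReal_le_ofReal
        linarith

end Aux

theorem exit_time_tail_bound_and_tightness
    {Ω : Type*} [MeasurableSpace Ω] (P : Measure Ω) [IsProbabilityMeasure P]
    {m : ℕ} (hm : 1 ≤ m) (B : ℝ → Ω → EuclideanSpace ℝ (Fin m))
    (hB : IsBrownianMotion P B) :
    (∀ (x : EuclideanSpace ℝ (Fin m)) (a : ℝ), ‖x‖ < a → ∀ t : ℝ, 0 < t →
      P {ω | t < exitTime (fun s ω => x + B s ω) a ω}
        ≤ ENNReal.ofReal (2 * stdNormalCDF ((‖x‖ + a) / Real.sqrt t) - 1)) ∧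
    (∀ rb rt : ℝ, 0 < rb → rb < rt → ∀ ε : ℝ, 0 < ε → ∃ T : ℝ, 0 < T ∧
      ∀ (x : EuclideanSpace ℝ (Fin m)) (a : ℝ), ‖x‖ ≤ rb → a ∈ Set.Ioo rb rt →
        P {ω | T < exitTime (fun s ω => x + B s ω) a ω} ≤ ENNReal.ofReal ε) := by
  constructor
  · exact fun x a hxa t ht => aux_tail_bound P hm B hB x a hxa t ht
  · intro rb rt hrb hrbrt ε hε
    refine ⟨max 1 (((rb + rt) / ε)^2), lt_of_lt_of_le one_pos (le_max_left _ _), ?_⟩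
    set T : ℝ := max 1 (((rb + rt) / ε)^2) with hT
    have hT0 : (0:ℝ) < T := lt_of_lt_of_le one_pos (le_max_left _ _)
    have hsT : (0:ℝ) < Real.sqrt T := Real.sqrt_pos.2 hT0
    intro x a hx ha
    have hxa : ‖x‖ < a := lt_of_le_of_lt hx ha.1
    have hq : (0:ℝ) < rb + rt := by linarith
    calc P {ω | T < exitTime (fun s ω => x + B s ω) a ω}
        ≤ ENNReal.ofReal (2 * stdNormalCDF ((‖x‖ + a) / Real.sqrt T) - 1) :=
          aux_tail_bound P hm B hB x a hxa T hT0
      _ ≤ ENNReal.ofReal ε := by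
          apply ENNReal.ofReal_le_ofReal
          have h1 : (‖x‖ + a) / Real.sqrt T ≤ (rb + rt) / Real.sqrt T := by
            gcongr
            linarith [ha.2.le]
          have h2 : (rb + rt) / Real.sqrt T ≤ ε := by
            rw [div_le_iff₀ hsT]
            have hle : (rb + rt) / ε ≤ Real.sqrt T := by
              calc (rb + rt) / ε = Real.sqrt (((rb + rt) / ε)^2) :=
                    (Real.sqrt_sq (by positivity)).symm
                _ ≤ Real.sqrt T := Real.sqrt_le_sqrt (le_max_right _ _)
            calc rb + rt = ε * ((rb + rt) / ε) := by field_simp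
              _ ≤ ε * Real.sqrt T := mul_le_mul_of_nonneg_left hle hε.le
          have h3 : stdNormalCDF ((‖x‖ + a) / Real.sqrt T)
              ≤ stdNormalCDF ((rb + rt) / Real.sqrt T) := aux_stdNormalCDF_mono h1
          have h4 := aux_twoPhi_le (u := (rb + rt) / Real.sqrt T) (by positivity)
          linarith
end

section
/- Let A be an open subset of ℝ^m, let u be a bounded continuous function on A satisfying the mean value property on balls (u(y) = (1/ν_{m,r}) ∫_{D̄_{y,r}} u(x) dx whenever D̄_{y,r} ⊆ A), and let r > 0. Then u has continuous derivatives of order k + 1 on the set A_r := {y ∈ A : D̄_{y,r} ⊆ A} for every k ≥ 1; in particular, u is infinitely differentiable on A_r. -/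
open MeasureTheory Metric Filter ProbabilityTheory

namespace MVPAux

open Set

lemma eng_mono : Monotone expNegInvGlue := by
  intro a b hab
  rcases le_or_gt a 0 with ha | ha
  · rw [expNegInvGlue.zero_of_nonpos ha]; exact expNegInvGlue.nonneg b
  · have hb : 0 < b := lt_of_lt_of_le ha hab
    rw [expNegInvGlue, expNegInvGlue, if_neg (not_le.2 ha), if_neg (not_le.2 hb)]
    apply Real.exp_le_exp.2
    rw [neg_le_neg_iff]
    exact inv_anti₀ ha hab

lemma eng_le_one (x : ℝ) : expNegInvGlue x ≤ 1 := by
  rcases le_or_gt x 0 with h | h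
  · rw [expNegInvGlue.zero_of_nonpos h]; norm_num
  · rw [expNegInvGlue, if_neg (not_le.2 h)]
    exact Real.exp_le_one_iff.2 (neg_nonpos.2 (inv_nonneg.2 h.le))

noncomputable def bump (m : ℕ) (δ : ℝ) (z : EuclideanSpace ℝ (Fin m)) : ℝ :=
  expNegInvGlue (δ ^ 2 - ‖z‖ ^ 2)

variable {m : ℕ} {δ : ℝ}

lemma bump_contDiff : ContDiff ℝ (⊤ : ℕ∞) (bump m δ) :=
  expNegInvGlue.contDiff.comp (contDiff_const.sub (contDiff_norm_sq ℝ))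

lemma bump_nonneg (z : EuclideanSpace ℝ (Fin m)) : 0 ≤ bump m δ z :=
  expNegInvGlue.nonneg _

lemma bump_le_one (z : EuclideanSpace ℝ (Fin m)) : bump m δ z ≤ 1 :=
  eng_le_one _

lemma bump_zero (hδ0 : 0 ≤ δ) {z : EuclideanSpace ℝ (Fin m)} (h : δ ≤ ‖z‖) :
    bump m δ z = 0 :=
  expNegInvGlue.zero_of_nonpos (by nlinarith [norm_nonneg z])

lemma bump_pos {z : EuclideanSpace ℝ (Fin m)} (h : ‖z‖ < δ) : 0 < bump m δ z :=
  expNegInvGlue.pos_of_pos (by nlinarith [norm_nonneg z])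

lemma bump_hcs (hδ : 0 < δ) : HasCompactSupport (bump m δ) := by
  apply HasCompactSupport.intro (isCompact_closedBall (0 : EuclideanSpace ℝ (Fin m)) δ)
  intro x hx
  apply bump_zero hδ.le
  have := (not_iff_not.2 (mem_closedBall_zero_iff (a := x) (r := δ))).1 hx
  linarith [not_le.1 this]

lemma superlevel (hδ : 0 < δ) {t : ℝ} (ht0 : 0 < t) (ht1 : t < expNegInvGlue (δ ^ 2)) :
    ∃ ρ : ℝ, 0 < ρ ∧ ρ ≤ δ ∧
      ∀ z : EuclideanSpace ℝ (Fin m), (t < bump m δ z ↔ ‖z‖ < ρ) := by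
  set S : Set ℝ := {s | t < expNegInvGlue s} with hS
  have hne : δ ^ 2 ∈ S := ht1
  have hlb : ∀ s ∈ S, (0 : ℝ) ≤ s := by
    intro s hs
    by_contra h
    push_neg at h
    rw [Set.mem_setOf_eq, expNegInvGlue.zero_of_nonpos h.le] at hs
    linarith
  have hbdd : BddBelow S := ⟨0, hlb⟩
  set a := sInf S with ha
  have ha0 : 0 ≤ a := le_csInf ⟨_, hne⟩ hlb
  have hopen : IsOpen S := isOpen_lt continuous_const (@expNegInvGlue.contDiff 0).continuous
  have hiff : ∀ s : ℝ, t < expNegInvGlue s ↔ a < s := by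
    intro s
    constructor
    · intro hs
      obtain ⟨ε, hε, hb⟩ := Metric.isOpen_iff.1 hopen s hs
      have hmem : s - ε / 2 ∈ S := by
        apply hb
        rw [mem_ball, Real.dist_eq, show s - ε / 2 - s = -(ε / 2) by ring, abs_neg,
          abs_of_pos (by linarith)]
        linarith
      exact lt_of_le_of_lt (csInf_le hbdd hmem) (by linarith)
    · intro hs
      obtain ⟨s₀, hs₀S, hlt⟩ := (csInf_lt_iff hbdd ⟨_, hne⟩).1 hs
      exact lt_of_lt_of_le hs₀S (eng_mono hlt.le)
  have haδ : a < δ ^ 2 := (hiff _).1 hne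
  refine ⟨Real.sqrt (δ ^ 2 - a), Real.sqrt_pos.2 (by linarith), ?_, ?_⟩
  · calc Real.sqrt (δ ^ 2 - a) ≤ Real.sqrt (δ ^ 2) := Real.sqrt_le_sqrt (by linarith)
      _ = δ := Real.sqrt_sq hδ.le
  · intro z
    calc t < bump m δ z ↔ a < δ ^ 2 - ‖z‖ ^ 2 := hiff _
      _ ↔ ‖z‖ ^ 2 < δ ^ 2 - a := by constructor <;> intro <;> linarith
      _ ↔ ‖z‖ < Real.sqrt (δ ^ 2 - a) := (Real.lt_sqrt (norm_nonneg z)).symm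

lemma bump_integrable (hδ : 0 < δ) : Integrable (bump m δ) (volume) :=
  bump_contDiff.continuous.integrable_of_hasCompactSupport (bump_hcs hδ)

lemma bump_integral_pos (hδ : 0 < δ) : 0 < ∫ z, bump m δ z := by
  rw [integral_pos_iff_support_of_nonneg bump_nonneg (bump_integrable hδ)]
  refine lt_of_lt_of_le (measure_ball_pos volume (0 : EuclideanSpace ℝ (Fin m)) hδ)
    (measure_mono fun z hz => ?_)
  exact (bump_pos (mem_ball_zero_iff.1 hz)).ne'

lemma key {m : ℕ} (hm : 2 ≤ m) {A : Set (EuclideanSpace ℝ (Fin m))}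
    {u u' : EuclideanSpace ℝ (Fin m) → ℝ} {M : ℝ}
    (hmv : ∀ (y : EuclideanSpace ℝ (Fin m)) (s : ℝ), 0 < s →
      Metric.closedBall y s ⊆ A →
      u y = (volume (Metric.ball (0 : EuclideanSpace ℝ (Fin m)) s)).toReal⁻¹ *
        ∫ x in Metric.closedBall y s, u x)
    (hu' : AEStronglyMeasurable u' volume) (hM : ∀ x, |u' x| ≤ M)
    {δ : ℝ} (hδ : 0 < δ) {y : EuclideanSpace ℝ (Fin m)} (hyA : closedBall y δ ⊆ A)
    (hagree : ∀ x ∈ closedBall y δ, u' x = u x) :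
    ∫ x, bump m δ (y - x) * u' x = (∫ z, bump m δ z) * u y := by
  haveI : Nonempty (Fin m) := ⟨⟨0, by omega⟩⟩
  haveI : Nontrivial (EuclideanSpace ℝ (Fin m)) := by infer_instance
  set κ : EuclideanSpace ℝ (Fin m) → ℝ := fun x => bump m δ (y - x) with hκdef
  have hκc : Continuous κ :=
    bump_contDiff.continuous.comp (continuous_const.sub continuous_id)
  have hκ_nonneg : ∀ x, 0 ≤ κ x := fun x => bump_nonneg _
  have hκ_le_one : ∀ x, κ x ≤ 1 := fun x => bump_le_one _
  -- integrability of the layered functions on the product space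
  have hint : ∀ (w : EuclideanSpace ℝ (Fin m) → ℝ) (Mw : ℝ),
      AEStronglyMeasurable w volume → (∀ x, |w x| ≤ Mw) →
      Integrable (Function.uncurry fun x t => (Ioo (0:ℝ) (κ x)).indicator (fun _ => w x) t)
        (volume.prod volume) := by
    intro w Mw hw hMw
    have hMw0 : 0 ≤ Mw := (abs_nonneg _).trans (hMw y)
    have hWmeas : MeasurableSet {p : EuclideanSpace ℝ (Fin m) × ℝ | p.2 ∈ Ioo 0 (κ p.1)} := by
      have : {p : EuclideanSpace ℝ (Fin m) × ℝ | p.2 ∈ Ioo 0 (κ p.1)}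
          = {p : EuclideanSpace ℝ (Fin m) × ℝ | (0:ℝ) < p.2}
            ∩ {p : EuclideanSpace ℝ (Fin m) × ℝ | p.2 < κ p.1} := by
        ext p; simp [Set.mem_Ioo, and_comm]
      rw [this]
      exact (measurableSet_lt measurable_const measurable_snd).inter
        (measurableSet_lt measurable_snd (hκc.measurable.comp measurable_fst))
    have heq : (Function.uncurry fun x t => (Ioo (0:ℝ) (κ x)).indicator (fun _ => w x) t)
        = Set.indicator {p : EuclideanSpace ℝ (Fin m) × ℝ | p.2 ∈ Ioo 0 (κ p.1)}
            (fun p => w p.1) := by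
      funext p
      simp only [Function.uncurry, Set.indicator_apply, Set.mem_setOf_eq]
    rw [heq]
    refine Integrable.mono'
      (g := (closedBall y δ ×ˢ Ioc (0:ℝ) 1).indicator fun _ => Mw) ?_ ?_ ?_
    · rw [integrable_indicator_iff (measurableSet_closedBall.prod measurableSet_Ioc)]
      refine integrableOn_const (LT.lt.ne ?_)
      rw [Measure.prod_prod]
      exact ENNReal.mul_lt_top measure_closedBall_lt_top measure_Ioc_lt_top
    · exact ((hw.comp_quasiMeasurePreserving Measure.quasiMeasurePreserving_fst).indicator hWmeas)
    · refine Filter.Eventually.of_forall fun p => ?_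
      by_cases hp : p ∈ {p : EuclideanSpace ℝ (Fin m) × ℝ | p.2 ∈ Ioo 0 (κ p.1)}
      · have hp' : p.2 ∈ Ioo 0 (κ p.1) := hp
        rw [Set.mem_Ioo] at hp'
        have h2 : 0 < κ p.1 := lt_trans hp'.1 hp'.2
        have h3 : ‖y - p.1‖ < δ := by
          by_contra h
          rw [show κ p.1 = bump m δ (y - p.1) from rfl,
            bump_zero hδ.le (not_lt.1 h)] at h2
          exact lt_irrefl 0 h2
        have h1 : p ∈ closedBall y δ ×ˢ Ioc (0:ℝ) 1 :=
          ⟨by rw [mem_closedBall, dist_comm, dist_eq_norm]; exact h3.le,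
            ⟨hp'.1, (hp'.2.trans_le (hκ_le_one _)).le⟩⟩
        rw [Set.indicator_of_mem hp, Set.indicator_of_mem h1, Real.norm_eq_abs]
        exact hMw p.1
      · rw [Set.indicator_of_notMem hp, norm_zero]
        exact Set.indicator_nonneg (fun _ _ => hMw0) p
  -- inner integral in t
  have inner_t : ∀ (w : EuclideanSpace ℝ (Fin m) → ℝ) (x : EuclideanSpace ℝ (Fin m)),
      (∫ t : ℝ, (Ioo (0:ℝ) (κ x)).indicator (fun _ => w x) t) = κ x * w x := by
    intro w x
    rw [integral_indicator_const _ measurableSet_Ioo, measureReal_def, Real.volume_Ioo, smul_eq_mul,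
      ENNReal.toReal_ofReal (by simpa using hκ_nonneg x), sub_zero]
  -- inner integral in x
  have inner_x : ∀ t : ℝ,
      (∫ x, (Ioo (0:ℝ) (κ x)).indicator (fun _ => u' x) t) =
        u y * ∫ x, (Ioo (0:ℝ) (κ x)).indicator (fun _ => (1:ℝ)) t := by
    intro t
    by_cases ht : 0 < t ∧ t < expNegInvGlue (δ ^ 2)
    · obtain ⟨ρ, hρ0, hρδ, hiff⟩ := superlevel (m := m) hδ ht.1 ht.2
      have hmem : ∀ x, t ∈ Ioo (0:ℝ) (κ x) ↔ x ∈ ball y ρ := by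
        intro x
        rw [Set.mem_Ioo, mem_ball, dist_comm, dist_eq_norm]
        constructor
        · rintro ⟨-, h2⟩; exact (hiff _).1 h2
        · intro h; exact ⟨ht.1, (hiff _).2 h⟩
      have hGind : ∀ x, (Ioo (0:ℝ) (κ x)).indicator (fun _ => u' x) t
          = (ball y ρ).indicator u' x := by
        intro x
        by_cases hx : x ∈ ball y ρ
        · rw [Set.indicator_of_mem ((hmem x).2 hx), Set.indicator_of_mem hx]
        · rw [Set.indicator_of_notMem (fun h => hx ((hmem x).1 h)),
            Set.indicator_of_notMem hx]
      have hHind : ∀ x, (Ioo (0:ℝ) (κ x)).indicator (fun _ => (1:ℝ)) t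
          = (ball y ρ).indicator (fun _ => (1:ℝ)) x := by
        intro x
        by_cases hx : x ∈ ball y ρ
        · rw [Set.indicator_of_mem ((hmem x).2 hx), Set.indicator_of_mem hx]
        · rw [Set.indicator_of_notMem (fun h => hx ((hmem x).1 h)),
            Set.indicator_of_notMem hx]
      have hball_cb : ball y ρ ⊆ closedBall y δ :=
        ball_subset_closedBall.trans (closedBall_subset_closedBall hρδ)
      have hae : ball y ρ =ᵐ[volume] closedBall y ρ := by
        rw [ae_eq_set]
        constructor
        · rw [Set.diff_eq_empty.2 ball_subset_closedBall]; exact measure_empty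
        · rw [closedBall_diff_ball]; exact Measure.addHaar_sphere volume y ρ
      have hpos : 0 < (volume (ball (0 : EuclideanSpace ℝ (Fin m)) ρ)).toReal :=
        ENNReal.toReal_pos (measure_ball_pos volume 0 hρ0).ne' measure_ball_lt_top.ne
      calc (∫ x, (Ioo (0:ℝ) (κ x)).indicator (fun _ => u' x) t)
          = ∫ x, (ball y ρ).indicator u' x := by simp only [hGind]
        _ = ∫ x in ball y ρ, u' x := integral_indicator measurableSet_ball
        _ = ∫ x in ball y ρ, u x :=
            setIntegral_congr_fun measurableSet_ball fun x hx => hagree x (hball_cb hx)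
        _ = ∫ x in closedBall y ρ, u x := setIntegral_congr_set hae
        _ = (volume (ball (0 : EuclideanSpace ℝ (Fin m)) ρ)).toReal * u y := by
            rw [hmv y ρ hρ0 ((closedBall_subset_closedBall hρδ).trans hyA)]
            field_simp
        _ = u y * ∫ x, (ball y ρ).indicator (fun _ => (1:ℝ)) x := by
            rw [integral_indicator_const _ measurableSet_ball, smul_eq_mul, mul_one,
              measureReal_def, Measure.addHaar_ball_center volume y ρ]
            ring
        _ = u y * ∫ x, (Ioo (0:ℝ) (κ x)).indicator (fun _ => (1:ℝ)) t := by
            simp only [hHind]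
    · have hz : ∀ (c : ℝ) (x : EuclideanSpace ℝ (Fin m)),
          (Ioo (0:ℝ) (κ x)).indicator (fun _ => c) t = 0 := by
        intro c x
        apply Set.indicator_of_notMem
        rw [Set.mem_Ioo]
        rintro ⟨h1, h2⟩
        apply ht
        refine ⟨h1, lt_of_lt_of_le h2 ?_⟩
        exact eng_mono (by nlinarith [norm_nonneg (y - x)])
      simp only [hz, integral_zero, mul_zero]
  have hGswap := integral_integral_swap (μ := volume) (ν := volume)
    (hint u' M hu' hM)
  have hHswap := integral_integral_swap (μ := volume) (ν := volume)
    (hint (fun _ => (1:ℝ)) 1 aestronglyMeasurable_const (by intro x; simp))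
  calc ∫ x, bump m δ (y - x) * u' x
      = ∫ x, ∫ t : ℝ, (Ioo (0:ℝ) (κ x)).indicator (fun _ => u' x) t := by
        refine integral_congr_ae (Filter.Eventually.of_forall fun x => ?_)
        exact (inner_t u' x).symm
    _ = ∫ t : ℝ, ∫ x, (Ioo (0:ℝ) (κ x)).indicator (fun _ => u' x) t := hGswap
    _ = ∫ t : ℝ, u y * ∫ x, (Ioo (0:ℝ) (κ x)).indicator (fun _ => (1:ℝ)) t :=
        integral_congr_ae (Filter.Eventually.of_forall inner_x)
    _ = u y * ∫ t : ℝ, ∫ x, (Ioo (0:ℝ) (κ x)).indicator (fun _ => (1:ℝ)) t :=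
        integral_const_mul _ _
    _ = u y * ∫ x, ∫ t : ℝ, (Ioo (0:ℝ) (κ x)).indicator (fun _ => (1:ℝ)) t := by
        exact congrArg (fun z => u y * z) hHswap.symm
    _ = u y * ∫ x, κ x := by
        congr 1
        refine integral_congr_ae (Filter.Eventually.of_forall fun x => ?_)
        exact (inner_t (fun _ => (1:ℝ)) x).trans (mul_one _)
    _ = u y * ∫ z, bump m δ z := by
        rw [show (∫ x, κ x) = ∫ x, bump m δ (y - x) from rfl,
          integral_sub_left_eq_self (bump m δ) volume y]
    _ = (∫ z, bump m δ z) * u y := mul_comm _ _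

end MVPAux

theorem mean_value_property_implies_smooth
    {m : ℕ} (hm : 2 ≤ m) (A : Set (EuclideanSpace ℝ (Fin m))) (hA : IsOpen A)
    (u : EuclideanSpace ℝ (Fin m) → ℝ) (hc : ContinuousOn u A)
    (hb : ∃ M : ℝ, ∀ x ∈ A, |u x| ≤ M)
    (hmv : ∀ (y : EuclideanSpace ℝ (Fin m)) (s : ℝ), 0 < s →
      Metric.closedBall y s ⊆ A →
      u y = (volume (Metric.ball (0 : EuclideanSpace ℝ (Fin m)) s)).toReal⁻¹ *
        ∫ x in Metric.closedBall y s, u x)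
    (r : ℝ) (hr : 0 < r) :
    (∀ k : ℕ, 1 ≤ k →
      ContDiffOn ℝ (k + 1) u {y ∈ A | Metric.closedBall y r ⊆ A}) ∧
    ContDiffOn ℝ (⊤ : ℕ∞) u {y ∈ A | Metric.closedBall y r ⊆ A} := by
  obtain ⟨M, hM⟩ := hb
  have main : ∀ y₀ ∈ {y ∈ A | Metric.closedBall y r ⊆ A},
      ContDiffAt ℝ (⊤ : ℕ∞) u y₀ := by
    rintro y₀ ⟨hy₀A, hy₀r⟩
    have hδ : 0 < r / 2 := by linarith
    set u' := (closedBall y₀ r).indicator u with hu'def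
    have hu'aesm : AEStronglyMeasurable u' volume :=
      (aestronglyMeasurable_indicator_iff measurableSet_closedBall).2
        ((hc.mono hy₀r).aestronglyMeasurable measurableSet_closedBall)
    have hu'bd : ∀ x, |u' x| ≤ max M 0 := by
      intro x
      rw [hu'def]
      by_cases hx : x ∈ closedBall y₀ r
      · rw [Set.indicator_of_mem hx]; exact le_max_of_le_left (hM x (hy₀r hx))
      · rw [Set.indicator_of_notMem hx]; simp
    have hu'int : Integrable u' volume :=
      (integrable_indicator_iff measurableSet_closedBall).2
        (ContinuousOn.integrableOn_compact (isCompact_closedBall _ _) (hc.mono hy₀r))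
    have hcpos : 0 < ∫ z, MVPAux.bump m (r / 2) z := MVPAux.bump_integral_pos hδ
    set v := convolution (MVPAux.bump m (r / 2)) u' (ContinuousLinearMap.lsmul ℝ ℝ) volume
      with hvdef
    have hv : ContDiff ℝ (⊤ : ℕ∞) v :=
      HasCompactSupport.contDiff_convolution_left _ (MVPAux.bump_hcs hδ)
        MVPAux.bump_contDiff hu'int.locallyIntegrable
    have hv' : ContDiff ℝ (⊤ : ℕ∞) (fun z => (∫ z, MVPAux.bump m (r / 2) z)⁻¹ * v z) :=
      contDiff_const.mul hv
    refine hv'.contDiffAt.congr_of_eventuallyEq ?_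
    refine Filter.eventuallyEq_of_mem (ball_mem_nhds y₀ hδ) fun y hy => ?_
    have hsub : closedBall y (r / 2) ⊆ closedBall y₀ r := by
      intro x hx
      have h1 := mem_ball.1 hy
      rw [mem_closedBall] at hx ⊢
      calc dist x y₀ ≤ dist x y + dist y y₀ := dist_triangle _ _ _
        _ ≤ r / 2 + r / 2 := add_le_add hx h1.le
        _ = r := by ring
    have hkey := MVPAux.key hm hmv hu'aesm hu'bd hδ (hsub.trans hy₀r)
      (fun x hx => Set.indicator_of_mem (hsub hx) u)
    have hconv : v y = ∫ x, MVPAux.bump m (r / 2) (y - x) * u' x := by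
      rw [hvdef, convolution_def]
      simp only [ContinuousLinearMap.lsmul_apply, smul_eq_mul]
      rw [← integral_sub_left_eq_self
        (fun x => MVPAux.bump m (r / 2) (y - x) * u' x) volume y]
      congr 1
      funext t
      rw [sub_sub_cancel]
    show u y = _
    rw [hconv, hkey, inv_mul_cancel_left₀ hcpos.ne']
  constructor
  · intro k hk
    exact fun y hy => ((main y hy).of_le (by exact_mod_cast le_top)).contDiffWithinAt
  · exact fun y hy => (main y hy).contDiffWithinAt
end
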